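/- arXiv:1810.09999 — 9 statements merged into one kernel-verified Lean document; each statement's English description precedes it below -/
import Mathlib

section
/- For any two bounded operators A and B on a Hilbert space, ‖exp(A+B)·exp(−A)‖ ≤ exp( sup_{s∈[0,1]} ‖exp(sA)·B·exp(−sA)‖ ). -/
open NormedSpace Set

set_option maxHeartbeats 1000000 in
set_option synthInstance.maxHeartbeats 1000000 in
/-- ‖e^{A+B} e^{−A}‖ ≤ exp( sup_{s∈[0,1]} ‖e^{sA} B e^{−sA}‖ )
for bounded operators A, B on a complex Hilbert space. -/
theorem norm_exp_add_mul_exp_neg_le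
    {E : Type*} [NormedAddCommGroup E] [InnerProductSpace ℂ E] [CompleteSpace E]
    (A B : E →L[ℂ] E) :
    ‖NormedSpace.exp (A + B) * NormedSpace.exp (-A)‖ ≤
      Real.exp (⨆ s : Set.Icc (0 : ℝ) 1,
        ‖NormedSpace.exp ((s : ℝ) • A) * B * NormedSpace.exp (-((s : ℝ) • A))‖) := by
  have hRC : (exp : (E →L[ℂ] E) → (E →L[ℂ] E)) = exp := rfl
  let +nondep : NormedAlgebra ℚ (E →L[ℂ] E) := .restrictScalars ℚ ℂ (E →L[ℂ] E)
  set C : ℝ → (E →L[ℂ] E) := fun s => exp (s • A) * B * exp (-(s • A)) with hCdef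
  set M : ℝ := ⨆ s : Icc (0 : ℝ) 1, ‖C s‖ with hMdef
  -- boundedness of the sup
  have hsmul : Continuous fun s : ℝ => s • A := continuous_id.smul continuous_const
  have hCcont : Continuous C := by
    have h1 : Continuous fun s : ℝ => exp (s • A) := exp_continuous.comp hsmul
    have h2 : Continuous fun s : ℝ => exp (-(s • A)) := exp_continuous.comp hsmul.neg
    exact (h1.mul continuous_const).mul h2
  have hbdd : BddAbove (Set.range fun s : Icc (0 : ℝ) 1 => ‖C s‖) := by
    have h : BddAbove ((fun s => ‖C s‖) '' Icc (0:ℝ) 1) :=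
      (isCompact_Icc.image (continuous_norm.comp hCcont)).bddAbove
    rw [show (fun s : Icc (0:ℝ) 1 => ‖C (s:ℝ)‖) = (fun s => ‖C s‖) ∘ Subtype.val from rfl,
      Set.range_comp, Subtype.range_coe]
    exact h
  have hM : ∀ s : ℝ, s ∈ Icc (0:ℝ) 1 → ‖C s‖ ≤ M := fun s hs =>
    le_ciSup hbdd (⟨s, hs⟩ : Icc (0:ℝ) 1)
  have hM0 : 0 ≤ M := le_trans (norm_nonneg _) (hM 0 (by norm_num))
  -- the curve G
  set G : ℝ → (E →L[ℂ] E) := fun s => exp (s • (A + B)) * exp (-(s • A)) with hGdef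
  have hinv : ∀ s : ℝ, exp (-(s • A)) * exp (s • A) = 1 := by
    intro s
    rw [← exp_add_of_commute ((Commute.refl (s • A)).neg_left), neg_add_cancel, exp_zero]
  have hderiv : ∀ s : ℝ, HasDerivAt G (G s * C s) s := by
    intro s
    have h1 : HasDerivAt (fun u : ℝ => exp (u • (A + B)))
        (exp (s • (A + B)) * (A + B)) s := by
      rw [← hRC]; exact hasDerivAt_exp_smul_const (𝕂 := ℝ) (A + B) s
    have h2 : HasDerivAt (fun u : ℝ => exp (-(u • A)))
        (exp (-(s • A)) * (-A)) s := by
      have := hasDerivAt_exp_smul_const (𝕂 := ℝ) (-A) s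
      rw [hRC] at this
      simp only [smul_neg] at this
      exact this
    have hmul := h1.mul h2
    have hcomm : Commute A (exp (-(s • A))) :=
      Commute.exp_right (((Commute.refl A).smul_right s).neg_right)
    have hAexp : A * exp (-(s • A)) = exp (-(s • A)) * A := hcomm.eq
    have key : G s * C s = exp (s • (A + B)) * B * exp (-(s • A)) := by
      have h : G s * C s
          = exp (s • (A + B)) *
            ((exp (-(s • A)) * exp (s • A)) * (B * exp (-(s • A)))) := by
        simp only [hGdef, hCdef, mul_assoc]
      rw [h, hinv, one_mul, ← mul_assoc]
    have key2 : exp (s • (A + B)) * (A + B) * exp (-(s • A))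
          + exp (s • (A + B)) * (exp (-(s • A)) * (-A))
        = exp (s • (A + B)) * B * exp (-(s • A)) := by
      rw [show exp (-(s • A)) * (-A) = (-A) * exp (-(s • A)) by
        rw [neg_mul, mul_neg, hAexp]]
      simp only [mul_add, add_mul, mul_neg, neg_mul, mul_assoc]
      abel
    rw [key, ← key2]
    exact hmul
  have hG1 : ∀ x ∈ Icc (0:ℝ) 1, ‖G x‖ ≤ gronwallBound 1 M 0 (x - 0) := by
    refine norm_le_gronwallBound_of_norm_deriv_right_le
      (fun x _ => ((hderiv x).continuousAt).continuousWithinAt)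
      (fun x _ => ((hderiv x).hasDerivWithinAt)) ?_ ?_
    · simp only [hGdef, zero_smul, neg_zero, exp_zero, one_mul]
      exact ContinuousLinearMap.norm_id_le
    · intro x hx
      calc ‖G x * C x‖ ≤ ‖G x‖ * ‖C x‖ := norm_mul_le _ _
        _ ≤ ‖G x‖ * M := by
            exact mul_le_mul_of_nonneg_left (hM x ⟨hx.1, hx.2.le⟩) (norm_nonneg _)
        _ = M * ‖G x‖ + 0 := by ring
  have key := hG1 1 (by norm_num)
  rw [gronwallBound_ε0] at key
  simp only [hGdef, one_smul, sub_zero, mul_one, one_mul] at key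
  exact key
end

section
/- Let H be a finite-dimensional Hilbert space, H₀ and V self-adjoint operators on H, and ρ a density matrix (positive, trace one) commuting with H₀. Define χ_t = tr( e^{−itH} ρ e^{H₀} e^{itH} e^{−H₀} ) with H = H₀ + V. Then χ_t is a positive real number and satisfies e^{−2|t|S} ≤ χ_t ≤ e^{2|t|S}, where S = sup_{s∈[−1,1]} ‖e^{(s/2)H₀} V e^{−(s/2)H₀}‖. -/
open scoped Matrix.Norms.L2Operator ComplexOrder

open NormedSpace Matrix

set_option linter.unusedSectionVars false

section Aux
variable {n : Type*} [Fintype n] [DecidableEq n]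

lemma my_norm_exp_add_le [Nonempty n] (A W : Matrix n n ℂ)
    (hA : ∀ u : ℝ, ‖exp ((u : ℂ) • A)‖ ≤ 1) (τ : ℝ) (hτ : 0 ≤ τ) :
    ‖exp ((τ : ℂ) • (A + W))‖ ≤ Real.exp (τ * ‖W‖) := by
  set f : ℝ → Matrix n n ℂ := fun u => exp ((u : ℂ) • (-A)) * exp ((u : ℂ) • (A + W)) with hf
  set g : ℝ → Matrix n n ℂ :=
    fun u => (exp ((u : ℂ) • (-A)) * W * exp ((u : ℂ) • A)) * f u with hg
  have hAneg : ∀ u : ℝ, ‖exp ((u : ℂ) • (-A))‖ ≤ 1 := by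
    intro u
    have : ((u : ℂ)) • (-A) = ((-u : ℝ) : ℂ) • A := by push_cast; rw [neg_smul, smul_neg]
    rw [this]; exact hA (-u)
  have hid : ∀ u : ℝ, exp ((u : ℂ) • A) * exp ((u : ℂ) • (-A)) = 1 := by
    intro u
    rw [← Matrix.exp_add_of_commute _ _ (((Commute.refl A).neg_right).smul_left _ |>.smul_right _)]
    rw [smul_neg, add_neg_cancel, exp_zero]
  have hderiv : ∀ u : ℝ, HasDerivAt f (g u) u := by
    intro u
    have h1 : HasDerivAt (fun u : ℝ => exp ((u : ℂ) • (-A)))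
        (exp ((u : ℂ) • (-A)) * (-A)) u := by
      have h := hasDerivAt_exp_smul_const (𝕂 := ℂ) (-A) (u : ℂ)
      refine (HasDerivAt.scomp (𝕜 := ℝ) (𝕜' := ℂ) u h Complex.ofRealCLM.hasDerivAt).congr_deriv ?_; simp
    have h2 : HasDerivAt (fun u : ℝ => exp ((u : ℂ) • (A + W)))
        ((A + W) * exp ((u : ℂ) • (A + W))) u := by
      have h := hasDerivAt_exp_smul_const' (𝕂 := ℂ) (A + W) (u : ℂ)
      refine (HasDerivAt.scomp (𝕜 := ℝ) (𝕜' := ℂ) u h Complex.ofRealCLM.hasDerivAt).congr_deriv ?_; simp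
    have := h1.mul h2
    refine this.congr_deriv (Eq.symm ?_)
    rw [hg, hf]
    simp only []
    rw [show (exp ((u : ℂ) • (-A)) * W * exp ((u : ℂ) • A)) *
        (exp ((u : ℂ) • (-A)) * exp ((u : ℂ) • (A + W)))
      = exp ((u : ℂ) • (-A)) * W *
        ((exp ((u : ℂ) • A) * exp ((u : ℂ) • (-A))) * exp ((u : ℂ) • (A + W))) by
        simp only [mul_assoc]]
    rw [hid u, one_mul]
    noncomm_ring
  have hbound : ∀ u : ℝ, ‖g u‖ ≤ ‖W‖ * ‖f u‖ + 0 := by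
    intro u
    rw [add_zero, hg]
    have h3 : ‖exp ((u : ℂ) • (-A)) * W * exp ((u : ℂ) • A)‖ ≤ ‖W‖ := by
      calc ‖exp ((u : ℂ) • (-A)) * W * exp ((u : ℂ) • A)‖
          ≤ ‖exp ((u : ℂ) • (-A)) * W‖ * ‖exp ((u : ℂ) • A)‖ := norm_mul_le _ _
        _ ≤ (‖exp ((u : ℂ) • (-A))‖ * ‖W‖) * ‖exp ((u : ℂ) • A)‖ :=
            mul_le_mul_of_nonneg_right (norm_mul_le _ _) (norm_nonneg _)
        _ ≤ (1 * ‖W‖) * 1 := by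
            apply mul_le_mul _ (hA u) (norm_nonneg _) (by positivity)
            exact mul_le_mul_of_nonneg_right (hAneg u) (norm_nonneg _)
        _ = ‖W‖ := by ring
    calc ‖exp ((u : ℂ) • (-A)) * W * exp ((u : ℂ) • A) * f u‖
        ≤ ‖exp ((u : ℂ) • (-A)) * W * exp ((u : ℂ) • A)‖ * ‖f u‖ := norm_mul_le _ _
      _ ≤ ‖W‖ * ‖f u‖ := mul_le_mul_of_nonneg_right h3 (norm_nonneg _)
  have hgron := norm_le_gronwallBound_of_norm_deriv_right_le
    (f := f) (f' := g) (δ := 1) (K := ‖W‖) (ε := 0) (a := 0) (b := τ)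
    (fun x _ => (hderiv x).continuousAt.continuousWithinAt)
    (fun x _ => (hderiv x).hasDerivWithinAt)
    (by simp [hf, exp_zero]) (fun x _ => hbound x) τ (by simp [hτ])
  rw [sub_zero, gronwallBound_ε0, one_mul] at hgron
  have hfinal : exp ((τ : ℂ) • (A + W)) = exp ((τ : ℂ) • A) * f τ := by
    rw [hf]
    simp only [← mul_assoc, hid τ, one_mul]
  rw [hfinal]
  calc ‖exp ((τ : ℂ) • A) * f τ‖ ≤ ‖exp ((τ : ℂ) • A)‖ * ‖f τ‖ := norm_mul_le _ _
    _ ≤ 1 * Real.exp (‖W‖ * τ) := mul_le_mul (hA τ) hgron (norm_nonneg _) zero_le_one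
    _ = Real.exp (τ * ‖W‖) := by rw [one_mul, mul_comm]

variable {n : Type*} [Fintype n] [DecidableEq n]

lemma my_norm_exp_I_smul [Nonempty n] {H0 : Matrix n n ℂ} (hH0 : H0.IsHermitian) (r : ℝ) :
    ‖exp (((r : ℂ) * Complex.I) • H0)‖ ≤ 1 := by
  set U := exp (((r : ℂ) * Complex.I) • H0) with hU
  have hstar : star U * U = 1 := by
    rw [hU, Matrix.star_eq_conjTranspose, ← Matrix.exp_conjTranspose,
      Matrix.conjTranspose_smul, hH0.eq]
    rw [← Matrix.exp_add_of_commute _ _ (((Commute.refl H0).smul_left _).smul_right _)]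
    have : star ((r : ℂ) * Complex.I) • H0 + ((r : ℂ) * Complex.I) • H0 = 0 := by
      rw [← add_smul]
      simp [Complex.ext_iff]
    rw [this, exp_zero]
  have h2 : ‖U‖ * ‖U‖ = 1 := by
    rw [← CStarRing.norm_star_mul_self, hstar, norm_one]
  nlinarith [norm_nonneg U]

lemma my_norm_exp_I_add [Nonempty n] {H0 : Matrix n n ℂ} (W : Matrix n n ℂ)
    (hH0 : H0.IsHermitian) (t : ℝ) :
    ‖exp ((Complex.I * (t : ℂ)) • (H0 + W))‖ ≤ Real.exp (|t| * ‖W‖) := by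
  rcases le_or_gt 0 t with ht | ht
  · have h1 : (Complex.I * (t : ℂ)) • (H0 + W) =
        ((t : ℝ) : ℂ) • (Complex.I • H0 + Complex.I • W) := by
      rw [← smul_add, smul_smul]; ring_nf
    rw [h1, abs_of_nonneg ht]
    have hIW : ‖W‖ = ‖Complex.I • W‖ := by
      rw [norm_smul, Complex.norm_I, one_mul]
    rw [hIW]
    apply my_norm_exp_add_le (Complex.I • H0) (Complex.I • W) _ t ht
    intro u
    rw [smul_smul]
    exact my_norm_exp_I_smul hH0 u
  · have h1 : (Complex.I * (t : ℂ)) • (H0 + W) =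
        (((-t) : ℝ) : ℂ) • ((-Complex.I) • H0 + (-Complex.I) • W) := by
      rw [← smul_add, smul_smul]; push_cast; ring_nf
    rw [h1, abs_of_neg ht]
    have hIW : ‖W‖ = ‖(-Complex.I) • W‖ := by
      rw [norm_smul, norm_neg, Complex.norm_I, one_mul]
    rw [hIW]
    apply my_norm_exp_add_le ((-Complex.I) • H0) ((-Complex.I) • W) _ (-t) (by linarith)
    intro u
    rw [smul_smul]
    have : (u : ℂ) * (-Complex.I) = ((-u : ℝ) : ℂ) * Complex.I := by push_cast; ring
    rw [this]
    exact my_norm_exp_I_smul hH0 (-u)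

lemma my_exp_half_mul (H0 : Matrix n n ℂ) :
    exp ((-(1/2 : ℂ)) • H0) * exp ((1/2 : ℂ) • H0) = 1 := by
  rw [← Matrix.exp_add_of_commute _ _ (((Commute.refl H0).smul_left _).smul_right _)]
  rw [← add_smul]
  norm_num [exp_zero]

lemma my_exp_half_mul' (H0 : Matrix n n ℂ) :
    exp ((1/2 : ℂ) • H0) * exp ((-(1/2 : ℂ)) • H0) = 1 := by
  rw [← Matrix.exp_add_of_commute _ _ (((Commute.refl H0).smul_left _).smul_right _)]
  rw [← add_smul]
  norm_num [exp_zero]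

lemma my_conj_bound [Nonempty n] (H0 V : Matrix n n ℂ) (hH0 : H0.IsHermitian) (t : ℝ) :
    ‖exp ((-(1/2 : ℂ)) • H0) * exp ((Complex.I * (t : ℂ)) • (H0 + V)) *
        exp ((1/2 : ℂ) • H0)‖
      ≤ Real.exp (|t| * ‖exp ((-(1/2 : ℂ)) • H0) * V * exp ((1/2 : ℂ) • H0)‖) := by
  set g := exp ((-(1/2 : ℂ)) • H0) with hg
  set gi := exp ((1/2 : ℂ) • H0) with hgi
  have hmul : g * gi = 1 := my_exp_half_mul H0
  have hunit : IsUnit g := ⟨⟨g, gi, hmul, my_exp_half_mul' H0⟩, rfl⟩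
  have hinv : g⁻¹ = gi := Matrix.inv_eq_right_inv hmul
  have hcommg : g * H0 = H0 * g := by
    have : Commute ((-(1/2 : ℂ)) • H0) H0 := (Commute.refl H0).smul_left _
    exact (this.exp_left)
  have hkey : g * exp ((Complex.I * (t : ℂ)) • (H0 + V)) * gi
      = exp ((Complex.I * (t : ℂ)) • (H0 + g * V * gi)) := by
    rw [← hinv, ← Matrix.exp_conj _ _ hunit]
    congr 1
    rw [hinv, Matrix.mul_smul, Matrix.smul_mul]
    congr 1
    rw [mul_add, add_mul, hcommg, mul_assoc, hmul, mul_one]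
  rw [hkey]
  exact my_norm_exp_I_add _ hH0 t

lemma my_le_S (H0 V : Matrix n n ℂ) :
    ‖exp ((-(1/2 : ℂ)) • H0) * V * exp ((1/2 : ℂ) • H0)‖
      ≤ ⨆ s : Set.Icc (-1 : ℝ) 1,
        ‖exp ((((s : ℝ) / 2 : ℝ) : ℂ) • H0) * V * exp (-((((s : ℝ) / 2 : ℝ) : ℂ) • H0))‖ := by
  set F : Set.Icc (-1 : ℝ) 1 → ℝ := fun s =>
    ‖exp ((((s : ℝ) / 2 : ℝ) : ℂ) • H0) * V * exp (-((((s : ℝ) / 2 : ℝ) : ℂ) • H0))‖ with hF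
  have hc1 : Continuous fun s : Set.Icc (-1 : ℝ) 1 => (((s : ℝ) / 2 : ℝ) : ℂ) • H0 := by
    fun_prop
  have hc : Continuous F := by
    apply Continuous.norm
    exact (((continuous_iff_continuousAt.2 fun x => (exp_analytic (𝕂 := ℂ) x).continuousAt).comp hc1).mul continuous_const).mul
      ((continuous_iff_continuousAt.2 fun x => (exp_analytic (𝕂 := ℂ) x).continuousAt).comp hc1.neg)
  have hbdd : BddAbove (Set.range F) := (isCompact_range hc).bddAbove
  have hle := le_ciSup hbdd (⟨-1, by norm_num⟩ : Set.Icc (-1 : ℝ) 1)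
  have heq : F ⟨-1, by norm_num⟩
      = ‖exp ((-(1/2 : ℂ)) • H0) * V * exp ((1/2 : ℂ) • H0)‖ := by
    rw [hF]
    norm_num [neg_smul]
  rw [heq] at hle
  exact hle

lemma my_trace_conj_mul (C : Matrix n n ℂ) :
    (Cᴴ * C).trace = ((∑ i, ∑ j, Complex.normSq (C i j) : ℝ) : ℂ) := by
  rw [Matrix.trace]
  simp only [Matrix.diag_apply, Matrix.mul_apply, Matrix.conjTranspose_apply]
  rw [Finset.sum_comm]
  push_cast
  congr 1
  ext i
  congr 1
  ext j
  rw [Complex.normSq_eq_conj_mul_self]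
  rfl

lemma my_norm_symm_sq (w : n → ℂ) :
    ‖(EuclideanSpace.equiv n ℂ).symm w‖ ^ 2 = ∑ j, Complex.normSq (w j) := by
  rw [EuclideanSpace.norm_eq, Real.sq_sqrt (by positivity)]
  congr 1
  ext j
  rw [← Complex.sq_norm]
  congr 1

end Aux

/-- for a finite-dimensional system with H = H₀ + V and density matrix ρ
commuting with H₀, the quantity χ_t = tr(e^{−itH} ρ e^{H₀} e^{itH} e^{−H₀}) is a positive
real number satisfying e^{−2|t|S} ≤ χ_t ≤ e^{2|t|S}, with
S = sup_{s∈[−1,1]} ‖e^{(s/2)H₀} V e^{−(s/2)H₀}‖. -/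
theorem chi_t_bounds
    {n : Type*} [Fintype n] [DecidableEq n]
    (H0 V ρ : Matrix n n ℂ)
    (hH0 : H0.IsHermitian) (hV : V.IsHermitian)
    (hρ : ρ.PosSemidef) (hρtr : ρ.trace = 1) (hcomm : ρ * H0 = H0 * ρ)
    (t : ℝ) (S : ℝ)
    (hS : S = ⨆ s : Set.Icc (-1 : ℝ) 1,
      ‖NormedSpace.exp ((((s : ℝ) / 2 : ℝ) : ℂ) • H0) * V *
        NormedSpace.exp (-((((s : ℝ) / 2 : ℝ) : ℂ) • H0))‖)
    (χ : ℂ)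
    (hχ : χ = (NormedSpace.exp ((-(Complex.I * t)) • (H0 + V)) * ρ *
      NormedSpace.exp H0 * NormedSpace.exp ((Complex.I * t) • (H0 + V)) *
      NormedSpace.exp (-H0)).trace) :
    χ.im = 0 ∧ 0 < χ.re ∧
      Real.exp (-(2 * |t| * S)) ≤ χ.re ∧ χ.re ≤ Real.exp (2 * |t| * S) := by
  rcases isEmpty_or_nonempty n with hn | hn
  · exfalso
    rw [Matrix.trace] at hρtr
    simp at hρtr
  set g := exp ((-(1/2 : ℂ)) • H0) with hgdef
  set gi := exp ((1/2 : ℂ) • H0) with hgidef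
  set X := exp ((-(Complex.I * (t : ℂ))) • (H0 + V)) with hXdef
  set Y := exp ((Complex.I * (t : ℂ)) • (H0 + V)) with hYdef
  set A := g * X * gi with hAdef
  set A' := g * Y * gi with hA'def
  have hmul : g * gi = 1 := my_exp_half_mul H0
  have hmul' : gi * g = 1 := my_exp_half_mul' H0
  have hYX : Y * X = 1 := by
    rw [hYdef, hXdef,
      ← Matrix.exp_add_of_commute _ _ (((Commute.refl (H0 + V)).smul_left _).smul_right _),
      ← add_smul]
    norm_num [exp_zero]
  have hA'A : A' * A = 1 := by
    rw [hA'def, hAdef]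
    simp only [mul_assoc]
    rw [← mul_assoc gi g, hmul', one_mul, ← mul_assoc Y X, hYX, one_mul, hmul]
  have hgH : gᴴ = g := by
    rw [hgdef, ← Matrix.exp_conjTranspose, Matrix.conjTranspose_smul, hH0.eq]
    norm_num
  have higH : giᴴ = gi := by
    rw [hgidef, ← Matrix.exp_conjTranspose, Matrix.conjTranspose_smul, hH0.eq]
    norm_num
  have hXH : Xᴴ = Y := by
    rw [hXdef, hYdef, ← Matrix.exp_conjTranspose, Matrix.conjTranspose_smul,
      Matrix.conjTranspose_add, hH0.eq, hV.eq]
    congr 1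
    simp [Complex.ext_iff]
  have hAH : Aᴴ = gi * Y * g := by
    rw [hAdef, Matrix.conjTranspose_mul, Matrix.conjTranspose_mul, hgH, higH, hXH, mul_assoc]
  obtain ⟨B, hB⟩ : ∃ B : Matrix n n ℂ, ρ = Bᴴ * B := by
    open scoped MatrixOrder in
    obtain ⟨X, hX, -, hXX⟩ := CFC.exists_sqrt_of_isSelfAdjoint_of_quasispectrumRestricts
      hρ.isHermitian (QuasispectrumRestricts.nnreal_of_nonneg hρ.nonneg)
    have hXc : Xᴴ = X := hX
    exact ⟨X, by rw [hXc, hXX]⟩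
  have hgiρ : gi * ρ = ρ * gi := by
    have h1 : Commute ρ gi :=
      Commute.exp_right ((show Commute ρ H0 from hcomm).smul_right (1/2 : ℂ))
    exact h1.symm.eq
  have higigi : gi * gi = exp H0 := by
    rw [hgidef, ← Matrix.exp_add_of_commute _ _
      (((Commute.refl H0).smul_left _).smul_right _), ← add_smul]
    norm_num
  have hgg : g * g = exp (-H0) := by
    rw [hgdef, ← Matrix.exp_add_of_commute _ _
      (((Commute.refl H0).smul_left _).smul_right _), ← add_smul]
    norm_num [neg_smul]
  -- trace identity
  have htrace : χ = ((B * Aᴴ)ᴴ * (B * Aᴴ)).trace := by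
    have e1 : (B * Aᴴ)ᴴ * (B * Aᴴ) = A * ρ * Aᴴ := by
      rw [Matrix.conjTranspose_mul, Matrix.conjTranspose_conjTranspose, hB]
      simp only [mul_assoc]
    have e2 : A * ρ * Aᴴ = g * (X * ρ * exp H0 * Y) * g := by
      rw [hAH, hAdef]
      simp only [mul_assoc]
      rw [← mul_assoc gi ρ, hgiρ, mul_assoc ρ gi, ← mul_assoc gi gi, higigi]
    have e3 : (g * (X * ρ * exp H0 * Y) * g).trace
        = ((X * ρ * exp H0 * Y) * (g * g)).trace := by
      rw [Matrix.trace_mul_comm _ g, ← mul_assoc, Matrix.trace_mul_comm]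
    rw [e1, e2, e3, hgg, hχ]
  set C := B * Aᴴ with hCdef
  have hval : χ = ((∑ i, ∑ j, Complex.normSq (C i j) : ℝ) : ℂ) :=
    htrace.trans (my_trace_conj_mul C)
  have hrow : ∀ i j, C i j = star ((A *ᵥ star (B i)) j) := by
    intro i j
    simp only [hCdef, Matrix.mul_apply, Matrix.mulVec, dotProduct,
      Matrix.conjTranspose_apply, star_sum, star_mul', star_star, Pi.star_apply]
    exact Finset.sum_congr rfl fun k _ => mul_comm _ _
  set r : n → ℝ := fun i => ‖(EuclideanSpace.equiv n ℂ).symm (A *ᵥ star (B i))‖ with hrdef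
  set s : n → ℝ := fun i => ‖(EuclideanSpace.equiv n ℂ).symm (star (B i))‖ with hsdef
  have hχre : χ.re = ∑ i, (r i) ^ 2 := by
    rw [hval, Complex.ofReal_re]
    refine Finset.sum_congr rfl fun i _ => ?_
    rw [hrdef]
    simp only []
    rw [my_norm_symm_sq]
    refine Finset.sum_congr rfl fun j _ => ?_
    rw [hrow i j]
    exact Complex.normSq_conj _
  have hχim : χ.im = 0 := by rw [hval, Complex.ofReal_im]
  have hsum1 : ∑ i, (s i) ^ 2 = 1 := by
    have h1 : (Bᴴ * B).trace = 1 := by rw [← hB]; exact hρtr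
    rw [my_trace_conj_mul B] at h1
    have h2 : (∑ i, ∑ j, Complex.normSq (B i j) : ℝ) = 1 := by exact_mod_cast h1
    rw [← h2]
    refine Finset.sum_congr rfl fun i _ => ?_
    rw [hsdef]
    simp only []
    rw [my_norm_symm_sq]
    refine Finset.sum_congr rfl fun j _ => ?_
    rw [Pi.star_apply]
    exact Complex.normSq_conj _
  have hAle : ∀ i, r i ≤ ‖A‖ * s i := fun i =>
    Matrix.l2_opNorm_mulVec A ((EuclideanSpace.equiv n ℂ).symm (star (B i)))
  have hA'le : ∀ i, s i ≤ ‖A'‖ * r i := by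
    intro i
    have h0 : star (B i) = A' *ᵥ (A *ᵥ star (B i)) := by
      rw [Matrix.mulVec_mulVec, hA'A, Matrix.one_mulVec]
    have h1 := Matrix.l2_opNorm_mulVec A' ((EuclideanSpace.equiv n ℂ).symm (A *ᵥ star (B i)))
    rw [hsdef]
    simp only []
    rw [h0]
    exact h1
  -- norm bounds
  have hWS : ‖g * V * gi‖ ≤ S := by rw [hS, hgdef, hgidef]; exact my_le_S H0 V
  have habs : 0 ≤ |t| := abs_nonneg t
  have hnA : ‖A‖ ≤ Real.exp (|t| * S) := by
    have h1 := my_conj_bound H0 V hH0 (-t)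
    have h2 : (Complex.I * ((-t : ℝ) : ℂ)) = -(Complex.I * (t : ℂ)) := by push_cast; ring
    rw [h2, abs_neg] at h1
    refine le_trans h1 (Real.exp_le_exp.mpr ?_)
    exact mul_le_mul_of_nonneg_left hWS habs
  have hnA' : ‖A'‖ ≤ Real.exp (|t| * S) := by
    refine le_trans (my_conj_bound H0 V hH0 t) (Real.exp_le_exp.mpr ?_)
    exact mul_le_mul_of_nonneg_left hWS habs
  set E := Real.exp (|t| * S) with hEdef
  have hEpos : 0 < E := Real.exp_pos _
  have hrnn : ∀ i, 0 ≤ r i := fun i => norm_nonneg _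
  have hsnn : ∀ i, 0 ≤ s i := fun i => norm_nonneg _
  have hupper : χ.re ≤ E ^ 2 := by
    rw [hχre]
    calc ∑ i, (r i) ^ 2 ≤ ∑ i, (‖A‖ * s i) ^ 2 :=
          Finset.sum_le_sum fun i _ => pow_le_pow_left₀ (hrnn i) (hAle i) 2
      _ = ‖A‖ ^ 2 * ∑ i, (s i) ^ 2 := by rw [Finset.mul_sum]; congr 1; ext i; ring
      _ = ‖A‖ ^ 2 := by rw [hsum1, mul_one]
      _ ≤ E ^ 2 := pow_le_pow_left₀ (norm_nonneg _) hnA 2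
  have hχrenn : 0 ≤ χ.re := by
    rw [hχre]; exact Finset.sum_nonneg fun i _ => sq_nonneg _
  have hlower : 1 ≤ E ^ 2 * χ.re := by
    calc (1 : ℝ) = ∑ i, (s i) ^ 2 := hsum1.symm
      _ ≤ ∑ i, (‖A'‖ * r i) ^ 2 :=
          Finset.sum_le_sum fun i _ => pow_le_pow_left₀ (hsnn i) (hA'le i) 2
      _ = ‖A'‖ ^ 2 * ∑ i, (r i) ^ 2 := by rw [Finset.mul_sum]; congr 1; ext i; ring
      _ ≤ E ^ 2 * ∑ i, (r i) ^ 2 := by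
          apply mul_le_mul_of_nonneg_right (pow_le_pow_left₀ (norm_nonneg _) hnA' 2)
          exact Finset.sum_nonneg fun i _ => sq_nonneg _
      _ = E ^ 2 * χ.re := by rw [hχre]
  have hE2 : E ^ 2 = Real.exp (2 * |t| * S) := by
    rw [hEdef, sq, ← Real.exp_add]; ring_nf
  have hlow : Real.exp (-(2 * |t| * S)) ≤ χ.re := by
    rw [Real.exp_neg, ← hE2]
    rw [inv_le_iff_one_le_mul₀ (by positivity)]
    linarith [hlower]
  refine ⟨hχim, lt_of_lt_of_le (Real.exp_pos _) hlow, hlow, ?_⟩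
  rw [← hE2]; exact hupper
end

section
/- Let ℙ_t be the Two-Time Measurement distribution of a finite-dimensional time-reversal invariant multisystem with multi-thermal initial state at inverse temperatures β = (β₁,…,β_ℓ). Then for every φ ∈ ℝ^ℓ with ℙ_t(φ) ≠ 0 one has ℙ_t(−φ) ≠ 0 and ℙ_t(φ)/ℙ_t(−φ) = exp( t Σ_j β_j φ_j ). Equivalently χ_t(α) = χ_t(β − α) for all α ∈ ℝ^ℓ. -/
open scoped ComplexOrder

set_option linter.unusedSectionVars false
set_option maxHeartbeats 1000000

section TTMaux
variable {n ι : Type*} [Fintype n] [DecidableEq n] [Fintype ι]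
open Matrix

lemma ttm_specMul (P : ι → Matrix n n ℂ) (hPidem : ∀ i, P i * P i = P i)
    (hPorth : ∀ i i', i ≠ i' → P i * P i' = 0) (f g : ι → ℂ) :
    (∑ i, f i • P i) * (∑ i, g i • P i) = ∑ i, (f i * g i) • P i := by
  rw [Finset.sum_mul]
  refine Finset.sum_congr rfl fun i _ => ?_
  rw [Finset.mul_sum]
  rw [Finset.sum_eq_single i]
  · rw [smul_mul_smul_comm, hPidem i]
  · intro i' _ hne
    rw [smul_mul_smul_comm, hPorth i i' (Ne.symm hne), smul_zero]
  · intro h; exact absurd (Finset.mem_univ i) h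

lemma ttm_specPow (P : ι → Matrix n n ℂ) (hPidem : ∀ i, P i * P i = P i)
    (hPorth : ∀ i i', i ≠ i' → P i * P i' = 0) (hPsum : ∑ i, P i = 1) (f : ι → ℂ) :
    ∀ k : ℕ, (∑ i, f i • P i) ^ k = ∑ i, (f i ^ k) • P i := by
  intro k
  induction k with
  | zero => simp [hPsum]
  | succ m ih =>
      rw [pow_succ, ih, ttm_specMul P hPidem hPorth]
      exact Finset.sum_congr rfl fun i _ => by rw [pow_succ]

lemma ttm_specExp (P : ι → Matrix n n ℂ) (hPidem : ∀ i, P i * P i = P i)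
    (hPorth : ∀ i i', i ≠ i' → P i * P i' = 0) (hPsum : ∑ i, P i = 1) (f : ι → ℂ) :
    NormedSpace.exp (∑ i, f i • P i) = ∑ i, NormedSpace.exp (f i) • P i := by
  letI : SeminormedRing (Matrix n n ℂ) := Matrix.linftyOpSemiNormedRing
  letI : NormedRing (Matrix n n ℂ) := Matrix.linftyOpNormedRing
  letI : NormedAlgebra ℂ (Matrix n n ℂ) := Matrix.linftyOpNormedAlgebra
  simp only [NormedSpace.exp_eq_tsum ℂ]
  simp only [ttm_specPow P hPidem hPorth hPsum f, Finset.smul_sum, smul_smul]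
  have hsum : ∀ i : ι, Summable (fun k : ℕ => ((k.factorial : ℂ))⁻¹ * f i ^ k) := fun i => by
    simpa [smul_eq_mul] using NormedSpace.expSeries_summable' (𝕂 := ℂ) (f i)
  rw [Summable.tsum_finsetSum fun i _ => (hsum i).smul_const (P i)]
  refine Finset.sum_congr rfl fun i _ => ?_
  rw [Summable.tsum_smul_const (hsum i)]
  simp [smul_eq_mul]

lemma ttm_conj_map_exp (A : Matrix n n ℂ) :
    (NormedSpace.exp A).map (starRingEnd ℂ) = NormedSpace.exp (A.map (starRingEnd ℂ)) := by
  have h : ∀ B : Matrix n n ℂ, B.map (starRingEnd ℂ) = (Bᴴ)ᵀ := by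
    intro B; ext a b; simp [Matrix.conjTranspose_apply, Matrix.map_apply]
  simp only [h]
  rw [← Matrix.exp_conjTranspose, ← Matrix.exp_transpose]

lemma ttm_map_smul (c : ℂ) (A : Matrix n n ℂ) :
    (c • A).map (starRingEnd ℂ) = (starRingEnd ℂ c) • A.map (starRingEnd ℂ) := by
  ext a b; simp [Matrix.map_apply]

end TTMaux

/-- transient fluctuation relation: for a time-reversal invariant confined
multisystem with multi-thermal initial state ρ = e^{−β·E}/Z, the Two-Time Measurement
distribution ℙ_t satisfies ℙ_t(φ)/ℙ_t(−φ) = e^{tΣβ_jφ_j} whenever ℙ_t(φ) ≠ 0, and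
equivalently χ_t(α) = χ_t(β − α).

The commuting family E = (H₁,…,H_ℓ) is encoded through its joint spectral resolution:
projections (P_i)_{i∈ι} with joint eigenvalues e : ι → ℝ^ℓ, so H_j = Σ_i e_i(j) P_i.
Time-reversal invariance is encoded by the matrix M of an antilinear involution
C(v) = M·conj(v) commuting with H, ρ and all H_j (conj A denotes entrywise conjugation). -/
theorem ttm_transient_fluctuation_relation
    {n ι : Type*} [Fintype n] [DecidableEq n] [Fintype ι] {ℓ : ℕ}
    (P : ι → Matrix n n ℂ)
    (hPherm : ∀ i, (P i).IsHermitian) (hPidem : ∀ i, P i * P i = P i)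
    (hPorth : ∀ i i', i ≠ i' → P i * P i' = 0) (hPsum : ∑ i, P i = 1)
    (e : ι → Fin ℓ → ℝ)
    (E : Fin ℓ → Matrix n n ℂ)
    (hE : ∀ j, E j = ∑ i, ((e i j : ℝ) : ℂ) • P i)
    (V : Matrix n n ℂ) (hV : V.IsHermitian)
    (H : Matrix n n ℂ) (hH : H = (∑ j, E j) + V)
    (β : Fin ℓ → ℝ) (hβ : ∀ j, 0 < β j)
    (ρ : Matrix n n ℂ)
    (hρ : ρ = ((NormedSpace.exp (-(∑ j, ((β j : ℝ) : ℂ) • E j))).trace)⁻¹ •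
      NormedSpace.exp (-(∑ j, ((β j : ℝ) : ℂ) • E j)))
    -- time-reversal invariance: antilinear involution commuting with H, ρ and all H_j
    (M : Matrix n n ℂ)
    (hMinv : M * M.map (starRingEnd ℂ) = 1)
    (hMH : M * H.map (starRingEnd ℂ) = H * M)
    (hMρ : M * ρ.map (starRingEnd ℂ) = ρ * M)
    (hME : ∀ j, M * (E j).map (starRingEnd ℂ) = E j * M)
    (t : ℝ)
    (Pr : (Fin ℓ → ℝ) → ℝ)
    (hPr : ∀ φ : Fin ℓ → ℝ, Pr φ = ∑ i, ∑ i',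
      (if (fun j => e i' j - e i j) = t • φ then
        ((NormedSpace.exp ((-(Complex.I * t)) • H) * ρ * P i *
          NormedSpace.exp ((Complex.I * t) • H) * P i').trace).re
       else 0))
    (χ : (Fin ℓ → ℝ) → ℝ)
    (hχ : ∀ α : Fin ℓ → ℝ, χ α = ∑ i, ∑ i',
      Real.exp (-(∑ j, α j * (e i' j - e i j))) *
        ((NormedSpace.exp ((-(Complex.I * t)) • H) * ρ * P i *
          NormedSpace.exp ((Complex.I * t) • H) * P i').trace).re) :
    (∀ φ : Fin ℓ → ℝ, Pr φ ≠ 0 →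
      Pr (-φ) ≠ 0 ∧ Pr φ / Pr (-φ) = Real.exp (t * ∑ j, β j * φ j)) ∧
    (∀ α : Fin ℓ → ℝ, χ α = χ (β - α)) := by
  classical
  set U : Matrix n n ℂ := NormedSpace.exp ((-(Complex.I * t)) • H) with hUdef
  set U' : Matrix n n ℂ := NormedSpace.exp ((Complex.I * t) • H) with hU'def
  set im : Finset (Fin ℓ → ℝ) := Finset.image e Finset.univ with him
  set K : (Fin ℓ → ℝ) → Matrix n n ℂ :=
    fun v => ∑ i, (if e i = v then (1:ℂ) else 0) • P i with hKdef
  -- basic facts about the conjugation matrix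
  have hMinv' : M.map (starRingEnd ℂ) * M = 1 := by
    have h2 := congrArg (fun X : Matrix n n ℂ => X.map (starRingEnd ℂ)) hMinv
    simp only [Matrix.map_mul] at h2
    have h3 : (M.map (starRingEnd ℂ)).map (starRingEnd ℂ) = M := by
      ext a b; simp [Matrix.map_apply]
    have h4 : (1 : Matrix n n ℂ).map (starRingEnd ℂ) = 1 :=
      Matrix.map_one _ (map_zero _) (map_one _)
    rw [h3, h4] at h2
    exact h2
  -- the antilinear conjugation, as a map on matrices
  set τ : Matrix n n ℂ →+ Matrix n n ℂ :=
    { toFun := fun A => M * A.map (starRingEnd ℂ) * M.map (starRingEnd ℂ)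
      map_zero' := by simp
      map_add' := by
        intro A B
        have : (A + B).map (starRingEnd ℂ)
            = A.map (starRingEnd ℂ) + B.map (starRingEnd ℂ) := by
          ext a b; simp [Matrix.map_apply]
        simp [this, mul_add, add_mul] } with hτdef
  have hτapp : ∀ A : Matrix n n ℂ,
      τ A = M * A.map (starRingEnd ℂ) * M.map (starRingEnd ℂ) := fun _ => rfl
  have hτmul : ∀ A B : Matrix n n ℂ, τ (A * B) = τ A * τ B := by
    intro A B
    simp only [hτapp, Matrix.map_mul]
    calc M * (A.map (starRingEnd ℂ) * B.map (starRingEnd ℂ)) * M.map (starRingEnd ℂ)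
        = M * A.map (starRingEnd ℂ) * (M.map (starRingEnd ℂ) * M) *
            B.map (starRingEnd ℂ) * M.map (starRingEnd ℂ) := by
          rw [hMinv']; noncomm_ring
      _ = M * A.map (starRingEnd ℂ) * M.map (starRingEnd ℂ) *
            (M * B.map (starRingEnd ℂ) * M.map (starRingEnd ℂ)) := by noncomm_ring
  have hτone : τ (1 : Matrix n n ℂ) = 1 := by
    rw [hτapp, Matrix.map_one _ (map_zero _) (map_one _), mul_one, hMinv]
  have hτsmul : ∀ (c : ℂ) (A : Matrix n n ℂ), τ (c • A) = (starRingEnd ℂ c) • τ A := by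
    intro c A
    simp only [hτapp, ttm_map_smul, Matrix.mul_smul, Matrix.smul_mul]
  have hτtrace : ∀ A : Matrix n n ℂ, (τ A).trace = starRingEnd ℂ A.trace := by
    intro A
    rw [hτapp, Matrix.trace_mul_cycle, hMinv', one_mul]
    simp [Matrix.trace, Matrix.map_apply, map_sum]
  have hτexp : ∀ A : Matrix n n ℂ,
      τ (NormedSpace.exp A) = NormedSpace.exp (τ A) := by
    intro A
    rw [hτapp, hτapp, ttm_conj_map_exp]
    have := Matrix.exp_units_conj
      (⟨M, M.map (starRingEnd ℂ), hMinv, hMinv'⟩ : (Matrix n n ℂ)ˣ) (A.map (starRingEnd ℂ))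
    exact this.symm
  have hτE : ∀ j, τ (E j) = E j := by
    intro j
    rw [hτapp, hME j, mul_assoc, hMinv, mul_one]
  have hτH : τ H = H := by
    rw [hτapp, hMH, mul_assoc, hMinv, mul_one]
  have hτU : τ U = U' := by
    rw [hUdef, hτexp, hτsmul, hτH]
    congr 1
    congr 1
    simp [Complex.conj_ofReal]
  have hτU' : τ U' = U := by
    rw [hU'def, hτexp, hτsmul, hτH]
    congr 1
    congr 1
    simp [Complex.conj_ofReal]
  -- facts about K
  have hK0 : ∀ v, v ∉ im → K v = 0 := by
    intro v hv
    simp only [hKdef]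
    refine Finset.sum_eq_zero fun i _ => ?_
    rw [if_neg, zero_smul]
    intro h
    exact hv (h ▸ Finset.mem_image_of_mem e (Finset.mem_univ i))
  have hKE : ∀ v j, K v * E j = ((v j : ℝ) : ℂ) • K v := by
    intro v j
    simp only [hKdef]
    rw [hE j, ttm_specMul P hPidem hPorth, Finset.smul_sum]
    refine Finset.sum_congr rfl fun i _ => ?_
    rw [smul_smul]
    congr 1
    by_cases h : e i = v
    · rw [if_pos h, h]; ring
    · rw [if_neg h]; ring
  have hEK : ∀ v j, E j * K v = ((v j : ℝ) : ℂ) • K v := by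
    intro v j
    simp only [hKdef]
    rw [hE j, ttm_specMul P hPidem hPorth, Finset.smul_sum]
    refine Finset.sum_congr rfl fun i _ => ?_
    rw [smul_smul]
    congr 1
    by_cases h : e i = v
    · rw [if_pos h, h]
    · rw [if_neg h]; ring
  have hKsum : ∑ v ∈ im, K v = 1 := by
    simp only [hKdef]
    rw [Finset.sum_comm]
    calc ∑ i, ∑ v ∈ im, (if e i = v then (1:ℂ) else 0) • P i
        = ∑ i, P i := by
          refine Finset.sum_congr rfl fun i _ => ?_
          rw [← Finset.sum_smul]
          rw [Finset.sum_ite_eq im (e i) (fun _ => (1:ℂ))]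
          rw [if_pos (Finset.mem_image_of_mem e (Finset.mem_univ i)), one_smul]
          
      _ = 1 := hPsum
  -- τ fixes K
  have hτK : ∀ v, τ (K v) = K v := by
    have hEL : ∀ v j, E j * τ (K v) = ((v j : ℝ) : ℂ) • τ (K v) := by
      intro v j
      have h1 := congrArg τ (hEK v j)
      rwa [hτmul, hτE, hτsmul, Complex.conj_ofReal] at h1
    have hLE : ∀ v j, τ (K v) * E j = ((v j : ℝ) : ℂ) • τ (K v) := by
      intro v j
      have h1 := congrArg τ (hKE v j)
      rwa [hτmul, hτE, hτsmul, Complex.conj_ofReal] at h1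
    have hLsum : ∑ v ∈ im, τ (K v) = 1 := by
      rw [← map_sum, hKsum, hτone]
    have hKL : ∀ v v', v ≠ v' → K v * τ (K v') = 0 := by
      intro v v' hne
      obtain ⟨j, hj⟩ := Function.ne_iff.mp hne
      have h1 : ((v j : ℝ) : ℂ) • (K v * τ (K v')) = ((v' j : ℝ) : ℂ) • (K v * τ (K v')) := by
        calc ((v j : ℝ) : ℂ) • (K v * τ (K v')) = (((v j : ℝ) : ℂ) • K v) * τ (K v') :=
              (smul_mul_assoc _ _ _).symm
          _ = (K v * E j) * τ (K v') := by rw [hKE]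
          _ = K v * (E j * τ (K v')) := mul_assoc _ _ _
          _ = K v * (((v' j : ℝ) : ℂ) • τ (K v')) := by rw [hEL]
          _ = ((v' j : ℝ) : ℂ) • (K v * τ (K v')) := mul_smul_comm _ _ _
      have h2 : (((v j : ℝ) : ℂ) - ((v' j : ℝ) : ℂ)) • (K v * τ (K v')) = 0 := by
        rw [sub_smul, h1, sub_self]
      rcases smul_eq_zero.mp h2 with h3 | h3
      · exact absurd (by exact_mod_cast sub_eq_zero.mp h3) hj
      · exact h3
    have hLK : ∀ v v', v ≠ v' → τ (K v) * K v' = 0 := by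
      intro v v' hne
      obtain ⟨j, hj⟩ := Function.ne_iff.mp hne
      have h1 : ((v j : ℝ) : ℂ) • (τ (K v) * K v') = ((v' j : ℝ) : ℂ) • (τ (K v) * K v') := by
        calc ((v j : ℝ) : ℂ) • (τ (K v) * K v') = (((v j : ℝ) : ℂ) • τ (K v)) * K v' :=
              (smul_mul_assoc _ _ _).symm
          _ = (τ (K v) * E j) * K v' := by rw [hLE]
          _ = τ (K v) * (E j * K v') := mul_assoc _ _ _
          _ = τ (K v) * (((v' j : ℝ) : ℂ) • K v') := by rw [hEK]
          _ = ((v' j : ℝ) : ℂ) • (τ (K v) * K v') := mul_smul_comm _ _ _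
      have h2 : (((v j : ℝ) : ℂ) - ((v' j : ℝ) : ℂ)) • (τ (K v) * K v') = 0 := by
        rw [sub_smul, h1, sub_self]
      rcases smul_eq_zero.mp h2 with h3 | h3
      · exact absurd (by exact_mod_cast sub_eq_zero.mp h3) hj
      · exact h3
    intro v
    by_cases hv : v ∈ im
    · have e1 : K v = K v * τ (K v) := by
        calc K v = K v * 1 := (mul_one _).symm
          _ = K v * ∑ v' ∈ im, τ (K v') := by rw [hLsum]
          _ = ∑ v' ∈ im, K v * τ (K v') := Finset.mul_sum _ _ _
          _ = K v * τ (K v) := by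
              refine Finset.sum_eq_single v (fun v' _ hne => hKL v v' (Ne.symm hne)) ?_
              intro h; exact absurd hv h
      have e2 : τ (K v) = K v * τ (K v) := by
        calc τ (K v) = 1 * τ (K v) := (one_mul _).symm
          _ = (∑ v' ∈ im, K v') * τ (K v) := by rw [hKsum]
          _ = ∑ v' ∈ im, K v' * τ (K v) := Finset.sum_mul _ _ _
          _ = K v * τ (K v) := by
              refine Finset.sum_eq_single v (fun v' _ hne => hKL v' v hne) ?_
              intro h; exact absurd hv h
      rw [e2, ← e1]
    · rw [hK0 v hv, map_zero]
  -- regrouping machinery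
  have hexpandK : ∀ (B C : Matrix n n ℂ) (v : Fin ℓ → ℝ),
      (B * K v * C).trace = ∑ i, (if e i = v then (1:ℂ) else 0) * (B * P i * C).trace := by
    intro B C v
    simp only [hKdef]
    rw [Finset.mul_sum, Finset.sum_mul, Matrix.trace_sum]
    refine Finset.sum_congr rfl fun i _ => ?_
    rw [Matrix.mul_smul, Matrix.smul_mul, Matrix.trace_smul, smul_eq_mul]
  have hregroup : ∀ (B : Matrix n n ℂ) (g : (Fin ℓ → ℝ) → ℂ) (C : (Fin ℓ → ℝ) → Matrix n n ℂ),
      ∑ i, g (e i) * (B * P i * C (e i)).trace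
        = ∑ v ∈ im, g v * (B * K v * C v).trace := by
    intro B g C
    have h1 : ∀ v ∈ im, g v * (B * K v * C v).trace
        = ∑ i, (if e i = v then (1:ℂ) else 0) * (g v * (B * P i * C v).trace) := by
      intro v _
      rw [hexpandK, Finset.mul_sum]
      exact Finset.sum_congr rfl fun i _ => by ring
    rw [Finset.sum_congr rfl h1, Finset.sum_comm]
    refine Finset.sum_congr rfl fun i _ => ?_
    rw [Finset.sum_eq_single (e i)]
    · rw [if_pos rfl, one_mul]
    · intro v _ hne
      rw [if_neg (fun h => hne h.symm), zero_mul]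
    · intro h; exact absurd (Finset.mem_image_of_mem e (Finset.mem_univ i)) h
  have hregroup1 : ∀ (B : Matrix n n ℂ) (g : (Fin ℓ → ℝ) → ℂ),
      ∑ i, g (e i) * (B * P i).trace = ∑ v ∈ im, g v * (B * K v).trace := by
    intro B g
    have h1 := hregroup B g (fun _ => 1)
    simpa only [Matrix.mul_one] using h1
  -- the thermal state in terms of the K's
  have hbetaE : -(∑ j, ((β j : ℝ) : ℂ) • E j)
      = ∑ i, ((-(∑ j, β j * e i j) : ℝ) : ℂ) • P i := by
    have h1 : ∀ j : Fin ℓ, ((β j : ℝ) : ℂ) • E j = ∑ i, (((β j * e i j : ℝ)) : ℂ) • P i := by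
      intro j
      rw [hE j, Finset.smul_sum]
      refine Finset.sum_congr rfl fun i _ => ?_
      rw [smul_smul]
      norm_cast
    rw [Finset.sum_congr rfl fun j _ => h1 j, Finset.sum_comm, ← Finset.sum_neg_distrib]
    refine Finset.sum_congr rfl fun i _ => ?_
    rw [← Finset.sum_smul, ← neg_smul]
    congr 1
    push_cast
    ring
  have hexpρ : NormedSpace.exp (-(∑ j, ((β j : ℝ) : ℂ) • E j))
      = ∑ i, ((Real.exp (-(∑ j, β j * e i j)) : ℝ) : ℂ) • P i := by
    rw [hbetaE, ttm_specExp P hPidem hPorth hPsum]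
    refine Finset.sum_congr rfl fun i _ => ?_
    congr 1
    rw [← Complex.exp_eq_exp_ℂ]
    exact (Complex.ofReal_exp _).symm
  have htrP : ∀ i, ((P i).trace) = (((P i).trace.re : ℝ) : ℂ) := by
    intro i
    have h1 := congrArg Matrix.trace (hPherm i)
    rw [Matrix.trace_conjTranspose] at h1
    exact (Complex.conj_eq_iff_re.mp h1).symm
  set ZR : ℝ := ∑ i, Real.exp (-(∑ j, β j * e i j)) * ((P i).trace.re) with hZRdef
  have hZ : (NormedSpace.exp (-(∑ j, ((β j : ℝ) : ℂ) • E j))).trace = ((ZR : ℝ) : ℂ) := by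
    rw [hexpρ, Matrix.trace_sum,
      Finset.sum_congr rfl fun (i : ι) _ => by rw [Matrix.trace_smul, smul_eq_mul, htrP i],
      hZRdef]
    push_cast
    rfl
  set zR : ℝ := ZR⁻¹ with hzRdef
  have hρ' : ρ = ((zR : ℝ) : ℂ) • ∑ i, ((Real.exp (-(∑ j, β j * e i j)) : ℝ) : ℂ) • P i := by
    rw [hρ, hZ, hexpρ, hzRdef, Complex.ofReal_inv]
  have hρK : ∀ v, ρ * K v
      = ((zR * Real.exp (-(∑ j, β j * v j)) : ℝ) : ℂ) • K v := by
    intro v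
    rw [hρ', Matrix.smul_mul]
    simp only [hKdef]
    rw [ttm_specMul P hPidem hPorth]
    have h1 : ∀ i ∈ (Finset.univ : Finset ι),
        ((((Real.exp (-(∑ j, β j * e i j)) : ℝ) : ℂ) * (if e i = v then (1:ℂ) else 0)) • P i)
        = ((((Real.exp (-(∑ j, β j * v j)) : ℝ) : ℂ) * (if e i = v then (1:ℂ) else 0)) • P i) := by
      intro i _
      by_cases h : e i = v
      · rw [h]
      · rw [if_neg h, mul_zero, mul_zero]
    rw [Finset.sum_congr rfl h1, Complex.ofReal_mul, mul_smul]
    congr 1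
    rw [Finset.smul_sum]
    exact Finset.sum_congr rfl fun i _ => by rw [smul_smul]
  -- Pr in terms of K
  have hPrK : ∀ φ : Fin ℓ → ℝ, Pr φ
      = ∑ v ∈ im, (zR * Real.exp (-(∑ j, β j * v j)))
          * ((U * K v * (U' * K (v + t • φ))).trace).re := by
    intro φ
    rw [hPr φ]
    have step1 : ∀ i i' : ι,
        (if (fun j => e i' j - e i j) = t • φ then ((U * ρ * P i * U' * P i').trace).re else 0)
        = ((if e i' = e i + t • φ then (1:ℂ) else 0) * ((U * ρ * P i * U') * P i').trace).re := by
      intro i i'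
      have hc : ((fun j => e i' j - e i j) = t • φ) ↔ (e i' = e i + t • φ) := by
        constructor
        · intro h; funext j
          have h2 := congrFun h j
          simp only [Pi.add_apply, Pi.smul_apply, smul_eq_mul] at h2 ⊢
          linarith
        · intro h; funext j
          rw [h]
          simp only [Pi.add_apply, Pi.smul_apply, smul_eq_mul]
          ring
      rw [if_congr hc rfl rfl, boole_mul, apply_ite Complex.re, Complex.zero_re]
    rw [Finset.sum_congr rfl fun i _ =>
      Finset.sum_congr rfl fun i' _ => step1 i i']
    have step2 : ∀ (B : Matrix n n ℂ) (a : Fin ℓ → ℝ),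
        ∑ v' ∈ im, (if v' = a then (1:ℂ) else 0) * (B * K v').trace = (B * K a).trace := by
      intro B a
      rw [Finset.sum_congr rfl fun v' _ => boole_mul (v' = a) ((B * K v').trace),
        Finset.sum_ite_eq' im a fun v' => (B * K v').trace]
      by_cases ha : a ∈ im
      · rw [if_pos ha]
      · rw [if_neg ha, hK0 a ha, Matrix.mul_zero, Matrix.trace_zero]
    have step3 : ∀ i : ι,
        ∑ i' : ι, ((if e i' = e i + t • φ then (1:ℂ) else 0) * ((U * ρ * P i * U') * P i').trace)
        = ((U * ρ * P i * U') * K (e i + t • φ)).trace := by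
      intro i
      rw [hregroup1 (U * ρ * P i * U') (fun v' => if v' = e i + t • φ then (1:ℂ) else 0)]
      exact step2 _ _
    rw [Finset.sum_congr rfl fun (i : ι) _ => (Complex.re_sum Finset.univ _).symm,
      ← Complex.re_sum]
    rw [Finset.sum_congr rfl fun i _ => step3 i]
    have step4 : ∀ i : ι, ((U * ρ * P i * U') * K (e i + t • φ)).trace
        = (1:ℂ) * ((U * ρ) * P i * (U' * K (e i + t • φ))).trace := by
      intro i
      rw [one_mul, mul_assoc (U * ρ * P i) U' (K (e i + t • φ))]
    rw [Finset.sum_congr rfl fun i _ => step4 i]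
    rw [hregroup (U * ρ) (fun _ => (1:ℂ)) (fun v => U' * K (v + t • φ))]
    have step5 : ∀ v ∈ im, (1:ℂ) * ((U * ρ) * K v * (U' * K (v + t • φ))).trace
        = ((zR * Real.exp (-(∑ j, β j * v j)) : ℝ) : ℂ)
            * ((U * K v * (U' * K (v + t • φ))).trace) := by
      intro v _
      rw [one_mul, mul_assoc U ρ (K v), hρK v, Matrix.mul_smul, Matrix.smul_mul,
        Matrix.trace_smul, smul_eq_mul]
    rw [Finset.sum_congr rfl step5, Complex.re_sum]
    exact Finset.sum_congr rfl fun v _ => Complex.re_ofReal_mul _ _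
  -- χ in terms of K
  have hχK : ∀ α : Fin ℓ → ℝ, χ α
      = ∑ v' ∈ im, ∑ v ∈ im, Real.exp (-(∑ j, α j * (v' j - v j)))
          * ((zR * Real.exp (-(∑ j, β j * v j)))
              * ((U * K v * (U' * K v')).trace).re) := by
    intro α
    rw [hχ α]
    have step1 : ∀ i i' : ι,
        Real.exp (-(∑ j, α j * (e i' j - e i j))) * ((U * ρ * P i * U' * P i').trace).re
        = (((Real.exp (-(∑ j, α j * (e i' j - e i j))) : ℝ) : ℂ)
            * ((U * ρ * P i * U') * P i').trace).re := by
      intro i i'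
      rw [Complex.re_ofReal_mul]
    rw [Finset.sum_congr rfl fun i _ => Finset.sum_congr rfl fun i' _ => step1 i i']
    have step2 : ∀ i : ι,
        ∑ i' : ι, (((Real.exp (-(∑ j, α j * (e i' j - e i j))) : ℝ) : ℂ)
            * ((U * ρ * P i * U') * P i').trace)
        = ∑ v' ∈ im, (((Real.exp (-(∑ j, α j * (v' j - e i j))) : ℝ) : ℂ)
            * ((U * ρ * P i * U') * K v').trace) := by
      intro i
      exact hregroup1 (U * ρ * P i * U')
        (fun v' => ((Real.exp (-(∑ j, α j * (v' j - e i j))) : ℝ) : ℂ))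
    rw [Finset.sum_congr rfl fun (i : ι) _ => (Complex.re_sum Finset.univ _).symm,
      ← Complex.re_sum]
    rw [Finset.sum_congr rfl fun i _ => step2 i, Finset.sum_comm]
    have step3 : ∀ v' ∈ im,
        ∑ i : ι, (((Real.exp (-(∑ j, α j * (v' j - e i j))) : ℝ) : ℂ)
            * ((U * ρ * P i * U') * K v').trace)
        = ∑ v ∈ im, (((Real.exp (-(∑ j, α j * (v' j - v j))) : ℝ) : ℂ)
            * ((U * ρ) * K v * (U' * K v')).trace) := by
      intro v' _
      have h4 : ∀ i : ι, ((U * ρ * P i * U') * K v').trace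
          = ((U * ρ) * P i * (U' * K v')).trace := by
        intro i
        rw [mul_assoc (U * ρ * P i) U' (K v')]
      rw [Finset.sum_congr rfl fun i _ => by rw [h4 i]]
      exact hregroup (U * ρ)
        (fun v => ((Real.exp (-(∑ j, α j * (v' j - v j))) : ℝ) : ℂ)) (fun _ => U' * K v')
    rw [Finset.sum_congr rfl step3]
    have step4 : ∀ v' ∈ im, ∀ v ∈ im,
        (((Real.exp (-(∑ j, α j * (v' j - v j))) : ℝ) : ℂ)
            * ((U * ρ) * K v * (U' * K v')).trace)
        = (((Real.exp (-(∑ j, α j * (v' j - v j))) : ℝ) : ℂ)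
            * (((zR * Real.exp (-(∑ j, β j * v j)) : ℝ) : ℂ)
              * (U * K v * (U' * K v')).trace)) := by
      intro v' _ v _
      rw [mul_assoc U ρ (K v), hρK v, Matrix.mul_smul, Matrix.smul_mul,
        Matrix.trace_smul, smul_eq_mul]
    rw [Finset.sum_congr rfl fun v' hv' => Finset.sum_congr rfl fun v hv => step4 v' hv' v hv]
    rw [Complex.re_sum]
    refine Finset.sum_congr rfl fun v' _ => ?_
    rw [Complex.re_sum]
    refine Finset.sum_congr rfl fun v _ => ?_
    rw [Complex.re_ofReal_mul, Complex.re_ofReal_mul]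
  -- symmetry of S from time-reversal invariance
  have hS : ∀ a b : Fin ℓ → ℝ,
      ((U * K a * (U' * K b)).trace).re = ((U * K b * (U' * K a)).trace).re := by
    intro a b
    have h1 : (starRingEnd ℂ) ((U * K a * (U' * K b)).trace)
        = (U * K b * (U' * K a)).trace := by
      rw [← hτtrace]
      have h2 : τ (U * K a * (U' * K b)) = U' * K a * (U * K b) := by
        rw [hτmul, hτmul, hτmul, hτU, hτU', hτK, hτK]
      rw [h2, Matrix.trace_mul_comm]
    have h3 := congrArg Complex.re h1
    rwa [Complex.conj_re] at h3
  have hSzero : ∀ a b : Fin ℓ → ℝ, b ∉ im → ((U * K a * (U' * K b)).trace).re = 0 := by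
    intro a b hb
    rw [hK0 b hb, Matrix.mul_zero, Matrix.mul_zero, Matrix.trace_zero, Complex.zero_re]
  -- coefficient identity
  have hcoef : ∀ (v φ : Fin ℓ → ℝ),
      zR * Real.exp (-(∑ j, β j * v j))
        = Real.exp (t * ∑ j, β j * φ j)
            * (zR * Real.exp (-(∑ j, β j * ((v + t • φ) j)))) := by
    intro v φ
    have h6 : ∑ j, β j * ((v + t • φ) j) = (∑ j, β j * v j) + t * (∑ j, β j * φ j) := by
      rw [Finset.mul_sum, ← Finset.sum_add_distrib]
      refine Finset.sum_congr rfl fun j _ => ?_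
      simp only [Pi.add_apply, Pi.smul_apply, smul_eq_mul]
      ring
    rw [h6, neg_add, Real.exp_add, Real.exp_neg (t * _)]
    have h7 : Real.exp (t * ∑ j, β j * φ j) ≠ 0 := Real.exp_ne_zero _
    field_simp
  -- the key transient fluctuation identity
  have hkey : ∀ φ : Fin ℓ → ℝ, Pr φ = Real.exp (t * ∑ j, β j * φ j) * Pr (-φ) := by
    intro φ
    rw [hPrK φ, hPrK (-φ), Finset.mul_sum]
    have hsub : ∀ v : Fin ℓ → ℝ, v + t • (-φ) = v - t • φ := by
      intro v; funext j
      simp only [Pi.add_apply, Pi.sub_apply, Pi.smul_apply, Pi.neg_apply, smul_eq_mul]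
      ring
    have hrw : ∑ v ∈ im, Real.exp (t * ∑ j, β j * φ j)
          * ((zR * Real.exp (-(∑ j, β j * v j)))
            * ((U * K v * (U' * K (v + t • (-φ)))).trace).re)
        = ∑ v ∈ im, Real.exp (t * ∑ j, β j * φ j)
            * ((zR * Real.exp (-(∑ j, β j * v j)))
              * ((U * K v * (U' * K (v - t • φ))).trace).re) :=
      Finset.sum_congr rfl fun v _ => by rw [hsub v]
    rw [hrw]
    have hL : ∑ v ∈ im, (zR * Real.exp (-(∑ j, β j * v j)))
          * ((U * K v * (U' * K (v + t • φ))).trace).re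
        = ∑ v ∈ im.filter (fun v => v + t • φ ∈ im),
            (zR * Real.exp (-(∑ j, β j * v j)))
              * ((U * K v * (U' * K (v + t • φ))).trace).re := by
      symm
      refine Finset.sum_filter_of_ne ?_
      intro v hv hne
      by_contra hmem
      exact hne (by rw [hSzero _ _ hmem, mul_zero])
    have hR : ∑ v ∈ im, Real.exp (t * ∑ j, β j * φ j)
          * ((zR * Real.exp (-(∑ j, β j * v j)))
              * ((U * K v * (U' * K (v - t • φ))).trace).re)
        = ∑ v ∈ im.filter (fun v => v - t • φ ∈ im),
            Real.exp (t * ∑ j, β j * φ j)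
              * ((zR * Real.exp (-(∑ j, β j * v j)))
                  * ((U * K v * (U' * K (v - t • φ))).trace).re) := by
      symm
      refine Finset.sum_filter_of_ne ?_
      intro v hv hne
      by_contra hmem
      exact hne (by rw [hSzero _ _ hmem, mul_zero, mul_zero])
    rw [hL, hR]
    refine Finset.sum_nbij' (fun v => v + t • φ) (fun v => v - t • φ) ?_ ?_ ?_ ?_ ?_
    · intro a ha
      rw [Finset.mem_filter] at ha ⊢
      exact ⟨ha.2, by rw [add_sub_cancel_right]; exact ha.1⟩
    · intro a ha
      rw [Finset.mem_filter] at ha ⊢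
      exact ⟨ha.2, by rw [sub_add_cancel]; exact ha.1⟩
    · intro a _; show a + t • φ - t • φ = a; rw [add_sub_cancel_right]
    · intro a _; show a - t • φ + t • φ = a; rw [sub_add_cancel]
    · intro a _
      rw [add_sub_cancel_right, hS (a + t • φ) a, hcoef a φ]
      ring
  constructor
  · intro φ hne
    have hk := hkey φ
    have hne' : Pr (-φ) ≠ 0 := by
      intro h0; rw [h0, mul_zero] at hk; exact hne hk
    refine ⟨hne', ?_⟩
    rw [hk, mul_div_assoc, div_self hne', mul_one]
  · intro α
    rw [hχK α, hχK (β - α), Finset.sum_comm]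
    refine Finset.sum_congr rfl fun v' _ => Finset.sum_congr rfl fun v _ => ?_
    rw [hS v' v]
    have hsum : (-(∑ j, α j * (v j - v' j))) + (-(∑ j, β j * v' j))
        = (-(∑ j, (β - α) j * (v' j - v j))) + (-(∑ j, β j * v j)) := by
      simp only [Pi.sub_apply]
      rw [← neg_add, ← neg_add, ← Finset.sum_add_distrib, ← Finset.sum_add_distrib]
      congr 1
      exact Finset.sum_congr rfl fun j _ => by ring
    calc Real.exp (-(∑ j, α j * (v j - v' j)))
          * (zR * Real.exp (-(∑ j, β j * v' j)) * ((U * K v * (U' * K v')).trace).re)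
        = Real.exp ((-(∑ j, α j * (v j - v' j))) + (-(∑ j, β j * v' j)))
            * (zR * ((U * K v * (U' * K v')).trace).re) := by rw [Real.exp_add]; ring
      _ = Real.exp ((-(∑ j, (β - α) j * (v' j - v j))) + (-(∑ j, β j * v j)))
            * (zR * ((U * K v * (U' * K v')).trace).re) := by rw [hsum]
      _ = Real.exp (-(∑ j, (β - α) j * (v' j - v j)))
            * (zR * Real.exp (-(∑ j, β j * v j)) * ((U * K v * (U' * K v')).trace).re) := by
          rw [Real.exp_add]; ring
end

section
/- Under the setup of the TTM distribution of a confined multisystem, the moment generating function admits the representation χ_t(α) = tr( e^{−itH} ρ̃ e^{α·E} e^{itH} e^{−α·E} ), where ρ̃ = Σ_e P_e ρ P_e, and in particular α ↦ χ_t(α) is entire analytic on ℂ^ℓ, χ_t(α) ∈ ℝ₊ for α ∈ ℝ^ℓ, |χ_t(α)| ≤ χ_t(Re α) for all α ∈ ℂ^ℓ, and χ_t(−α)⁻¹ ≤ χ_t(α) for all α ∈ ℝ^ℓ. -/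
open scoped ComplexOrder
open scoped Matrix

lemma aux_trace_nonneg {n : Type*} [Fintype n] [DecidableEq n]
    {A : Matrix n n ℂ} (hA : A.PosSemidef) : 0 ≤ A.trace := by
  have h : ∀ i, 0 ≤ A i i := by
    intro i
    have := hA.dotProduct_mulVec_nonneg (Pi.single i 1)
    simpa [dotProduct, Matrix.mulVec, Pi.single_apply, Finset.sum_ite_eq] using this
  exact Finset.sum_nonneg fun i _ => h i

lemma aux_exp_smul_idem {n : Type*} [Fintype n] [DecidableEq n]
    (P : Matrix n n ℂ) (h : P * P = P) (c : ℂ) :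
    NormedSpace.exp (c • P) = 1 + (Complex.exp c - 1) • P := by
  letI : SeminormedRing (Matrix n n ℂ) := Matrix.linftyOpSemiNormedRing
  letI : NormedRing (Matrix n n ℂ) := Matrix.linftyOpNormedRing
  letI : NormedAlgebra ℂ (Matrix n n ℂ) := Matrix.linftyOpNormedAlgebra
  have hpow : ∀ k : ℕ, P ^ (k + 1) = P := by
    intro k; induction k with
    | zero => simp
    | succ k ih => rw [pow_succ, ih, h]
  have hsum : Summable fun m : ℕ => ((m.factorial : ℂ))⁻¹ • (c • P) ^ m :=
    NormedSpace.expSeries_summable' (𝕂 := ℂ) (c • P)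
  have hsumC : Summable fun m : ℕ => ((m.factorial : ℂ))⁻¹ • c ^ m :=
    NormedSpace.expSeries_summable' (𝕂 := ℂ) c
  have hC : (∑' m : ℕ, (((m+1).factorial : ℂ))⁻¹ • c ^ (m + 1)) = Complex.exp c - 1 := by
    have h1 : Complex.exp c = ∑' m : ℕ, ((m.factorial : ℂ))⁻¹ • c ^ m := by
      rw [Complex.exp_eq_exp_ℂ, NormedSpace.exp_eq_tsum ℂ]
    have h2 := Summable.tsum_eq_zero_add hsumC
    simp only [Nat.factorial_zero, pow_zero] at h2
    rw [h1, h2]; simp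
  rw [NormedSpace.exp_eq_tsum ℂ]
  show (∑' m : ℕ, ((m.factorial : ℂ))⁻¹ • (c • P) ^ m) = _
  rw [Summable.tsum_eq_zero_add hsum]
  have h3 : ∀ m : ℕ, (((m+1).factorial : ℂ))⁻¹ • (c • P) ^ (m + 1)
      = ((((m+1).factorial : ℂ))⁻¹ • c ^ (m + 1)) • P := by
    intro m
    rw [smul_pow, hpow, smul_smul, smul_eq_mul]
  simp only [h3]
  rw [Summable.tsum_smul_const (by simpa [Function.comp_def] using hsumC.comp_injective (add_left_injective 1)) P, hC]
  simp

lemma aux_exp_sum_proj {n ι : Type*} [Fintype n] [DecidableEq n] [Fintype ι]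
    (P : ι → Matrix n n ℂ) (hPidem : ∀ i, P i * P i = P i)
    (hPorth : ∀ i i', i ≠ i' → P i * P i' = 0) (hPsum : ∑ i, P i = 1)
    (c : ι → ℂ) :
    NormedSpace.exp (∑ i, c i • P i) = ∑ i, Complex.exp (c i) • P i := by
  classical
  letI : SeminormedRing (Matrix n n ℂ) := Matrix.linftyOpSemiNormedRing
  letI : NormedRing (Matrix n n ℂ) := Matrix.linftyOpNormedRing
  letI : NormedAlgebra ℂ (Matrix n n ℂ) := Matrix.linftyOpNormedAlgebra
  have key : ∀ s : Finset ι, NormedSpace.exp (∑ i ∈ s, c i • P i)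
      = (1 - ∑ i ∈ s, P i) + ∑ i ∈ s, Complex.exp (c i) • P i := by
    intro s
    induction s using Finset.induction with
    | empty => simp
    | @insert a s ha ih =>
      have hne : ∀ i ∈ s, i ≠ a := fun i hi h => ha (h ▸ hi)
      have h1 : (c a • P a) * (∑ i ∈ s, c i • P i) = 0 := by
        rw [Finset.mul_sum]
        apply Finset.sum_eq_zero
        intro i hi
        simp [smul_mul_assoc, mul_smul_comm, hPorth a i (hne i hi).symm.symm.symm]
      have h2 : (∑ i ∈ s, c i • P i) * (c a • P a) = 0 := by
        rw [Finset.sum_mul]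
        apply Finset.sum_eq_zero
        intro i hi
        simp [smul_mul_assoc, mul_smul_comm, hPorth i a (hne i hi)]
      have hcomm : Commute (c a • P a) (∑ i ∈ s, c i • P i) := h1.trans h2.symm
      rw [Finset.sum_insert ha, Matrix.exp_add_of_commute _ _ hcomm, ih,
        aux_exp_smul_idem (P a) (hPidem a) (c a)]
      have hQ : P a * (∑ i ∈ s, P i) = 0 := by
        rw [Finset.mul_sum]
        exact Finset.sum_eq_zero fun i hi => hPorth a i (fun h => ha (h ▸ hi))
      have hR : P a * (∑ i ∈ s, Complex.exp (c i) • P i) = 0 := by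
        rw [Finset.mul_sum]
        apply Finset.sum_eq_zero
        intro i hi
        rw [mul_smul_comm, hPorth a i (fun h => ha (h ▸ hi)), smul_zero]
      have hPaX : P a * ((1 - ∑ i ∈ s, P i) + ∑ i ∈ s, Complex.exp (c i) • P i) = P a := by
        rw [mul_add, mul_sub, mul_one, hQ, hR]
        simp
      rw [add_mul, one_mul, smul_mul_assoc, hPaX, Finset.sum_insert ha, Finset.sum_insert ha,
        sub_smul, one_smul]
      abel
  rw [key Finset.univ, hPsum]
  simp

lemma aux_trace_idem {n : Type*} [Fintype n]
    (X Q : Matrix n n ℂ) (h : Q * Q = Q) : (X * Q).trace = (Q * X * Q).trace := by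
  rw [Matrix.trace_mul_comm (Q * X) Q, ← Matrix.mul_assoc, h, Matrix.trace_mul_comm]


/-- the TTM moment generating function admits the trace representation
χ_t(α) = tr(e^{−itH} ρ̃ e^{α·E} e^{itH} e^{−α·E}) with ρ̃ = Σ_e P_e ρ P_e; it is entire
in α ∈ ℂ^ℓ, nonnegative real for real α, satisfies |χ_t(α)| ≤ χ_t(Re α) and
χ_t(−α)⁻¹ ≤ χ_t(α) for real α. -/
theorem ttm_mgf_trace_representation
    {n ι : Type*} [Fintype n] [DecidableEq n] [Fintype ι] {ℓ : ℕ}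
    (P : ι → Matrix n n ℂ)
    (hPherm : ∀ i, (P i).IsHermitian) (hPidem : ∀ i, P i * P i = P i)
    (hPorth : ∀ i i', i ≠ i' → P i * P i' = 0) (hPsum : ∑ i, P i = 1)
    (e : ι → Fin ℓ → ℝ)
    (E : Fin ℓ → Matrix n n ℂ)
    (hE : ∀ j, E j = ∑ i, ((e i j : ℝ) : ℂ) • P i)
    (V : Matrix n n ℂ) (hV : V.IsHermitian)
    (H : Matrix n n ℂ) (hH : H = (∑ j, E j) + V)
    (ρ : Matrix n n ℂ) (hρ : ρ.PosSemidef) (hρtr : ρ.trace = 1)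
    (ρt : Matrix n n ℂ) (hρt : ρt = ∑ i, P i * ρ * P i)
    (t : ℝ)
    (χ : (Fin ℓ → ℂ) → ℂ)
    (hχ : ∀ α : Fin ℓ → ℂ, χ α = ∑ i, ∑ i',
      Complex.exp (-(∑ j, α j * (((e i' j : ℝ) : ℂ) - ((e i j : ℝ) : ℂ)))) *
        (NormedSpace.exp ((-(Complex.I * t)) • H) * ρt * P i *
          NormedSpace.exp ((Complex.I * t) • H) * P i').trace) :
    (∀ α : Fin ℓ → ℂ, χ α =
      (NormedSpace.exp ((-(Complex.I * t)) • H) * ρt *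
        NormedSpace.exp (∑ j, α j • E j) *
        NormedSpace.exp ((Complex.I * t) • H) *
        NormedSpace.exp (-(∑ j, α j • E j))).trace) ∧
    AnalyticOnNhd ℂ χ Set.univ ∧
    (∀ α : Fin ℓ → ℝ, (χ (fun j => ((α j : ℝ) : ℂ))).im = 0 ∧
      0 ≤ (χ (fun j => ((α j : ℝ) : ℂ))).re) ∧
    (∀ α : Fin ℓ → ℂ, ‖χ α‖ ≤ (χ (fun j => (((α j).re : ℝ) : ℂ))).re) ∧
    (∀ α : Fin ℓ → ℝ, ((χ (fun j => ((-α j : ℝ) : ℂ))).re)⁻¹ ≤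
      (χ (fun j => ((α j : ℝ) : ℂ))).re) := by
  classical
  letI : SeminormedRing (Matrix n n ℂ) := Matrix.linftyOpSemiNormedRing
  letI : NormedRing (Matrix n n ℂ) := Matrix.linftyOpNormedRing
  letI : NormedAlgebra ℂ (Matrix n n ℂ) := Matrix.linftyOpNormedAlgebra
  set Um : Matrix n n ℂ := NormedSpace.exp ((-(Complex.I * t)) • H) with hUm
  set Up : Matrix n n ℂ := NormedSpace.exp ((Complex.I * t) • H) with hUp
  -- Hermiticity of H
  have hEherm : ∀ j, (E j).IsHermitian := by
    intro j
    rw [hE]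
    show _ᴴ = _
    rw [Matrix.conjTranspose_sum]
    refine Finset.sum_congr rfl fun i _ => ?_
    rw [Matrix.conjTranspose_smul, (hPherm i).eq]
    congr 1
    simp [Complex.star_def, Complex.conj_ofReal]
  have hHherm : H.IsHermitian := by
    rw [hH]
    refine Matrix.IsHermitian.add ?_ hV
    show _ᴴ = _
    rw [Matrix.conjTranspose_sum]
    exact Finset.sum_congr rfl fun j _ => (hEherm j).eq
  have hUadj : Umᴴ = Up := by
    rw [hUm, hUp, ← Matrix.exp_conjTranspose]
    congr 1
    rw [Matrix.conjTranspose_smul, hHherm.eq]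
    congr 1
    simp [Complex.star_def, map_mul, Complex.conj_ofReal]
  have hUU : Up * Um = 1 := by
    rw [hUm, hUp, ← Matrix.exp_add_of_commute _ _ (((Commute.refl H).smul_left _).smul_right _)]
    rw [← add_smul]
    simp
  -- the key exponential formula
  have hexpE : ∀ w : Fin ℓ → ℂ, NormedSpace.exp (∑ j, w j • E j)
      = ∑ i, Complex.exp (∑ j, w j * ((e i j : ℝ) : ℂ)) • P i := by
    intro w
    have hrw : (∑ j, w j • E j) = ∑ i, (∑ j, w j * ((e i j : ℝ) : ℂ)) • P i := by
      simp_rw [hE, Finset.smul_sum, smul_smul]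
      rw [Finset.sum_comm]
      simp_rw [← Finset.sum_smul]
    rw [hrw, aux_exp_sum_proj P hPidem hPorth hPsum]
  have hexpnegE : ∀ w : Fin ℓ → ℂ, NormedSpace.exp (-(∑ j, w j • E j))
      = ∑ i, Complex.exp (-(∑ j, w j * ((e i j : ℝ) : ℂ))) • P i := by
    intro w
    have h1 : -(∑ j, w j • E j) = ∑ j, (-w j) • E j := by
      simp [neg_smul, ← Finset.sum_neg_distrib]
    rw [h1, hexpE]
    refine Finset.sum_congr rfl fun i _ => ?_
    congr 1
    simp [← Finset.sum_neg_distrib]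
  -- properties of ρt
  have hρtP : ∀ i, ρt * P i = P i * ρ * P i := by
    intro i
    rw [hρt, Finset.sum_mul]
    rw [Finset.sum_eq_single i]
    · rw [mul_assoc, hPidem]
    · intro k _ hk
      rw [mul_assoc, hPorth k i hk, mul_zero]
    · intro h; exact absurd (Finset.mem_univ i) h
  have htrρt : ρt.trace = 1 := by
    rw [hρt, Matrix.trace_sum]
    have h1 : ∀ i, (P i * ρ * P i).trace = (ρ * P i).trace := by
      intro i
      rw [Matrix.trace_mul_comm, ← Matrix.mul_assoc, hPidem, Matrix.trace_mul_comm]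
    simp_rw [h1]
    rw [← Matrix.trace_sum]
    simp_rw [← Matrix.mul_sum]
    rw [hPsum, Matrix.mul_one, hρtr]
  -- the trace coefficients
  have hc0 : ∀ i i', (0 : ℂ) ≤ (Um * ρt * P i * Up * P i').trace := by
    intro i i'
    have hA : (P i' * Um * P i)ᴴ = P i * Up * P i' := by
      rw [Matrix.conjTranspose_mul, Matrix.conjTranspose_mul, (hPherm i).eq, (hPherm i').eq,
        hUadj, Matrix.mul_assoc]
    have hkey : (Um * ρt * P i * Up * P i').trace
        = ((P i' * Um * P i) * ρ * (P i' * Um * P i)ᴴ).trace := by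
      rw [aux_trace_idem (Um * ρt * P i * Up) (P i') (hPidem i'), hA]
      rw [Matrix.mul_assoc Um ρt (P i), hρtP i]
      simp only [Matrix.mul_assoc]
    rw [hkey]
    exact aux_trace_nonneg (hρ.mul_mul_conjTranspose_same (P i' * Um * P i))
  have hsum1 : ∑ i, ∑ i', (Um * ρt * P i * Up * P i').trace = 1 := by
    have h1 : ∀ i, ∑ i', (Um * ρt * P i * Up * P i').trace = (ρt * P i).trace := by
      intro i
      rw [← Matrix.trace_sum]
      simp_rw [← Matrix.mul_sum]
      rw [hPsum, Matrix.mul_one, Matrix.trace_mul_comm]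
      simp only [← Matrix.mul_assoc]
      rw [hUU, Matrix.one_mul]
    simp_rw [h1]
    rw [← Matrix.trace_sum]
    simp_rw [← Matrix.mul_sum]
    rw [hPsum, Matrix.mul_one, htrρt]
  -- real coefficients
  set r : ι → ι → ℝ := fun i i' => ((Um * ρt * P i * Up * P i').trace).re with hr
  have hr0 : ∀ i i', 0 ≤ r i i' := by
    intro i i'
    have := (Complex.le_def.mp (hc0 i i')).1
    simpa using this
  have him : ∀ i i', ((Um * ρt * P i * Up * P i').trace).im = 0 := by
    intro i i'
    have := (Complex.le_def.mp (hc0 i i')).2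
    simpa using this.symm
  have hcr : ∀ i i', (Um * ρt * P i * Up * P i').trace = ((r i i' : ℝ) : ℂ) := by
    intro i i'
    apply Complex.ext
    · simp [hr]
    · simp [him i i']
  have hrsum : ∑ i, ∑ i', r i i' = 1 := by
    have h2 : ((∑ i, ∑ i', r i i' : ℝ) : ℂ) = 1 := by
      push_cast
      simp_rw [← hcr]
      exact hsum1
    exact_mod_cast h2
  -- the real form of χ on real arguments
  have hreal : ∀ β : Fin ℓ → ℝ, χ (fun j => ((β j : ℝ) : ℂ))
      = (((∑ i, ∑ i', Real.exp (∑ j, β j * (e i j - e i' j)) * r i i') : ℝ) : ℂ) := by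
    intro β
    rw [hχ]
    push_cast
    refine Finset.sum_congr rfl fun i _ => Finset.sum_congr rfl fun i' _ => ?_
    rw [hcr i i']
    congr 2
    rw [← Finset.sum_neg_distrib]
    refine Finset.sum_congr rfl fun j _ => by ring
  have hrealre : ∀ β : Fin ℓ → ℝ, (χ (fun j => ((β j : ℝ) : ℂ))).re
      = ∑ i, ∑ i', Real.exp (∑ j, β j * (e i j - e i' j)) * r i i' := by
    intro β; rw [hreal β]; exact Complex.ofReal_re _
  have hrealim : ∀ β : Fin ℓ → ℝ, (χ (fun j => ((β j : ℝ) : ℂ))).im = 0 := by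
    intro β; rw [hreal β]; exact Complex.ofReal_im _
  -- Part 1
  have part1 : ∀ α : Fin ℓ → ℂ, χ α =
      (Um * ρt * NormedSpace.exp (∑ j, α j • E j) * Up *
        NormedSpace.exp (-(∑ j, α j • E j))).trace := by
    intro α
    rw [hχ α, hexpE α, hexpnegE α]
    simp only [Matrix.mul_sum, Matrix.sum_mul, mul_smul_comm, smul_mul_assoc,
      Matrix.trace_sum, Matrix.trace_smul, smul_eq_mul, Finset.mul_sum]
    rw [Finset.sum_comm]
    refine Finset.sum_congr rfl fun i _ => Finset.sum_congr rfl fun i' _ => ?_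
    rw [← mul_assoc, ← Complex.exp_add]
    congr 2
    rw [← Finset.sum_neg_distrib, ← Finset.sum_neg_distrib, ← Finset.sum_add_distrib]
    exact Finset.sum_congr rfl fun j _ => by ring
  -- Part 2 : analyticity
  have part2 : AnalyticOnNhd ℂ χ Set.univ := by
    have hχfun : χ = fun α : Fin ℓ → ℂ => ∑ i, ∑ i',
        Complex.exp (-(∑ j, α j * (((e i' j : ℝ) : ℂ) - ((e i j : ℝ) : ℂ)))) *
          (Um * ρt * P i * Up * P i').trace := funext hχ
    rw [hχfun]
    apply Finset.analyticOnNhd_fun_sum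
    intro i _
    apply Finset.analyticOnNhd_fun_sum
    intro i' _
    refine AnalyticOnNhd.mul ?_ analyticOnNhd_const
    apply AnalyticOnNhd.cexp
    have hlin : AnalyticOnNhd ℂ
        (fun α : Fin ℓ → ℂ => (∑ j, α j * (((e i' j : ℝ) : ℂ) - ((e i j : ℝ) : ℂ)))) Set.univ := by
      apply Finset.analyticOnNhd_fun_sum
      intro j _
      exact ((ContinuousLinearMap.proj j : (Fin ℓ → ℂ) →L[ℂ] ℂ).analyticOnNhd _).mul
        analyticOnNhd_const
    exact hlin.neg
  -- Part 3
  have part3 : ∀ α : Fin ℓ → ℝ, (χ (fun j => ((α j : ℝ) : ℂ))).im = 0 ∧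
      0 ≤ (χ (fun j => ((α j : ℝ) : ℂ))).re := by
    intro α
    refine ⟨hrealim α, ?_⟩
    rw [hrealre α]
    refine Finset.sum_nonneg fun i _ => Finset.sum_nonneg fun i' _ =>
      mul_nonneg (Real.exp_pos _).le (hr0 i i')
  -- Part 4
  have part4 : ∀ α : Fin ℓ → ℂ, ‖χ α‖ ≤ (χ (fun j => (((α j).re : ℝ) : ℂ))).re := by
    intro α
    rw [hχ α, hrealre (fun j => (α j).re)]
    refine le_trans ((norm_sum_le _ _).trans
      (Finset.sum_le_sum fun i _ => norm_sum_le _ _)) (le_of_eq ?_)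
    refine Finset.sum_congr rfl fun i _ => Finset.sum_congr rfl fun i' _ => ?_
    rw [norm_mul, Complex.norm_exp, hcr i i', Complex.norm_real, Real.norm_of_nonneg (hr0 i i')]
    congr 1
    rw [Complex.neg_re, Complex.re_sum, ← Finset.sum_neg_distrib]
    congr 1
    refine Finset.sum_congr rfl fun j _ => ?_
    rw [← Complex.ofReal_sub, Complex.mul_re]
    simp only [Complex.ofReal_re, Complex.ofReal_im, mul_zero, sub_zero]
    ring
  -- Part 5
  have part5 : ∀ α : Fin ℓ → ℝ, ((χ (fun j => ((-α j : ℝ) : ℂ))).re)⁻¹ ≤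
      (χ (fun j => ((α j : ℝ) : ℂ))).re := by
    intro α
    rw [hrealre α, hrealre (fun j => -α j)]
    set S1 := ∑ i, ∑ i', Real.exp (∑ j, α j * (e i j - e i' j)) * r i i' with hS1
    set S2 := ∑ i, ∑ i', Real.exp (∑ j, -α j * (e i j - e i' j)) * r i i' with hS2
    have hCS : (∑ p : ι × ι, r p.1 p.2) ^ 2 ≤
        (∑ p : ι × ι, Real.exp (∑ j, α j * (e p.1 j - e p.2 j)) * r p.1 p.2) *
        (∑ p : ι × ι, Real.exp (∑ j, -α j * (e p.1 j - e p.2 j)) * r p.1 p.2) := by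
      apply Finset.sum_sq_le_sum_mul_sum_of_sq_eq_mul
      · intro p _; exact mul_nonneg (Real.exp_pos _).le (hr0 _ _)
      · intro p _; exact mul_nonneg (Real.exp_pos _).le (hr0 _ _)
      · intro p _
        have hneg : ∑ j, -α j * (e p.1 j - e p.2 j) = -(∑ j, α j * (e p.1 j - e p.2 j)) := by
          rw [← Finset.sum_neg_distrib]
          exact Finset.sum_congr rfl fun j _ => by ring
        rw [hneg, mul_mul_mul_comm, ← Real.exp_add, add_neg_cancel, Real.exp_zero, one_mul, sq]
    rw [Fintype.sum_prod_type, Fintype.sum_prod_type, Fintype.sum_prod_type, hrsum,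
      one_pow, ← hS1, ← hS2] at hCS
    have hS2nonneg : 0 ≤ S2 := Finset.sum_nonneg fun i _ => Finset.sum_nonneg fun i' _ =>
      mul_nonneg (Real.exp_pos _).le (hr0 i i')
    have hS2pos : 0 < S2 := by
      rcases hS2nonneg.lt_or_eq with h | h
      · exact h
      · exfalso; rw [← h, mul_zero] at hCS; linarith
    rw [← one_div, div_le_iff₀ hS2pos]
    exact hCS
  exact ⟨part1, part2, part3, part4, part5⟩
end

section
/- Let f_t : ℝ^ℓ → (0,∞], t > 0, be such that log f_t is convex, f_t(θ𝟙) ≤ e^{Ct} for all θ ∈ ℝ with a constant C possibly depending on θ but with limsup_{t→∞}(1/t) log f_t(θ𝟙) = 0, and suppose χ̄(α) := limsup_{t→∞} (1/t) log f_t(α) is finite and continuous on B(α₀) = {α : α·𝟙 = 0, ‖α‖_∞ < α₀}. If moreover f_t(α+θ𝟙) < ∞ for all α ∈ B(α₀), θ ∈ ℝ, then for every α ∈ B(α₀) and θ ∈ ℝ, χ̄(α + θ𝟙) ≤ χ̄(α), and by convexity in fact χ̄(α + θ𝟙) = χ̄(α). -/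
open Filter
open Topology

lemma aux_limsup_coe_mul {c : ℝ} (hc : 0 < c) (g : ℝ → EReal) :
    limsup (fun t => (c : EReal) * g t) atTop = (c : EReal) * limsup g atTop := by
  have hmono : Monotone (fun x : EReal => (c : EReal) * x) := fun x y h =>
    mul_le_mul_of_nonneg_left h (by exact_mod_cast hc.le)
  have hcont : ContinuousAt (fun x : EReal => (c : EReal) * x) (limsup g atTop) := by
    have h2 : ContinuousAt (fun p : EReal × EReal => p.1 * p.2) ((c : EReal), limsup g atTop) :=
      EReal.continuousAt_mul (Or.inl (by simp [hc.ne']))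
        (Or.inl (by simp [hc.ne'])) (Or.inl (EReal.coe_ne_bot c))
        (Or.inl (EReal.coe_ne_top c))
    exact h2.comp ((continuous_const.prodMk continuous_id).continuousAt)
  exact (hmono.map_limsup_of_continuousAt g hcont).symm

lemma aux_coe_mul_ne_top {c : ℝ} (hc : 0 < c) {x : EReal} (hx : x ≠ ⊤) : (c : EReal) * x ≠ ⊤ := by
  induction x using EReal.rec with
  | bot => rw [EReal.coe_mul_bot_of_pos hc]; exact bot_ne_top
  | coe y => rw [← EReal.coe_mul]; exact EReal.coe_ne_top _
  | top => exact absurd rfl hx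


/-- Hölder argument for the translation symmetry: let f_t be log-convex
(0,∞]-valued functions on ℝ^ℓ with limsup (1/t) log f_t(θ𝟙) = 0 for every θ, and
suppose χ̄(α) = limsup (1/t) log f_t(α) is finite and continuous on
B(α₀) = {α·𝟙 = 0, ‖α‖_∞ < α₀}, and f_t(α+θ𝟙) < ∞ there. Then
χ̄(α + θ𝟙) = χ̄(α) for α ∈ B(α₀), θ ∈ ℝ. -/
theorem limsup_cgf_translation_symmetry_of_logConvex
    {ℓ : ℕ} (α₀ : ℝ) (hα₀ : 0 < α₀)
    (f : ℝ → (Fin ℓ → ℝ) → ENNReal)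
    (hpos : ∀ t α, f t α ≠ 0)
    (hconv : ∀ t : ℝ, ∀ a b : Fin ℓ → ℝ, ∀ u : ℝ, 0 ≤ u → u ≤ 1 →
      ENNReal.log (f t (u • a + (1 - u) • b)) ≤
        ((u : ℝ) : EReal) * ENNReal.log (f t a) +
          ((1 - u : ℝ) : EReal) * ENNReal.log (f t b))
    (hgrow : ∀ θ : ℝ, ∃ C : ℝ, ∀ t : ℝ, 0 < t →
      f t (θ • (1 : Fin ℓ → ℝ)) ≤ ENNReal.ofReal (Real.exp (C * t)))
    (hzero : ∀ θ : ℝ,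
      limsup (fun t : ℝ => ((1 / t : ℝ) : EReal) *
        ENNReal.log (f t (θ • (1 : Fin ℓ → ℝ)))) atTop = 0)
    (χbar : (Fin ℓ → ℝ) → EReal)
    (hχbar : ∀ α, χbar α =
      limsup (fun t : ℝ => ((1 / t : ℝ) : EReal) * ENNReal.log (f t α)) atTop)
    (hfinite : ∀ α : Fin ℓ → ℝ, (∑ j, α j) = 0 → ‖α‖ < α₀ → ∃ r : ℝ, χbar α = (r : EReal))
    (hcont : ContinuousOn χbar {α : Fin ℓ → ℝ | (∑ j, α j) = 0 ∧ ‖α‖ < α₀})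
    (hfin : ∀ t : ℝ, ∀ α : Fin ℓ → ℝ, (∑ j, α j) = 0 → ‖α‖ < α₀ → ∀ θ : ℝ,
      f t (α + θ • (1 : Fin ℓ → ℝ)) < ⊤) :
    ∀ α : Fin ℓ → ℝ, (∑ j, α j) = 0 → ‖α‖ < α₀ → ∀ θ : ℝ,
      χbar (α + θ • (1 : Fin ℓ → ℝ)) = χbar α := by
  -- One-sided key inequality
  have hkey : ∀ β : Fin ℓ → ℝ, (∑ j, β j) = 0 → ‖β‖ < α₀ → ∀ θ : ℝ,
      χbar (β + θ • (1 : Fin ℓ → ℝ)) ≤ χbar β := by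
    intro β hs hn θ
    -- Step 1: fixed p bound
    have hstep : ∀ p : ℝ, 1 < p → p * ‖β‖ < α₀ →
        χbar (β + θ • (1 : Fin ℓ → ℝ)) ≤ ((1 / p : ℝ) : EReal) * χbar (p • β) := by
      intro p hp hpn
      have hp0 : (0:ℝ) < p := lt_trans one_pos hp
      set u : ℝ := 1 / p with hu
      have hu0 : 0 < u := by positivity
      have hu1 : u < 1 := by rw [hu]; exact (div_lt_one hp0).2 hp
      have h1u : 0 < 1 - u := by linarith
      set θ' : ℝ := θ / (1 - u) with hθ'
      have hsum' : (∑ j, (p • β) j) = 0 := by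
        have h : (∑ j, (p • β) j) = p * ∑ j, β j := by
          rw [Finset.mul_sum]; exact Finset.sum_congr rfl (fun j _ => by simp)
        rw [h, hs, mul_zero]
      have hnorm' : ‖p • β‖ < α₀ := by
        rw [norm_smul, Real.norm_eq_abs, abs_of_pos hp0]; exact hpn
      have hcomb : β + θ • (1 : Fin ℓ → ℝ) = u • (p • β) + (1 - u) • (θ' • (1 : Fin ℓ → ℝ)) := by
        rw [smul_smul, smul_smul]
        have e1 : u * p = 1 := by rw [hu]; exact one_div_mul_cancel hp0.ne'
        have e2 : (1 - u) * θ' = θ := by rw [hθ', mul_div_cancel₀ _ h1u.ne']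
        rw [e1, e2, one_smul]
      have hsum0 : (∑ j, (0 : Fin ℓ → ℝ) j) = 0 := by simp
      have hnorm0 : ‖(0 : Fin ℓ → ℝ)‖ < α₀ := by rw [norm_zero]; exact hα₀
      -- pointwise bound for t > 0
      have hptw : ∀ᶠ t in atTop, ((1 / t : ℝ) : EReal) * ENNReal.log (f t (β + θ • (1 : Fin ℓ → ℝ))) ≤
          ((fun t : ℝ => (u : EReal) * (((1 / t : ℝ) : EReal) * ENNReal.log (f t (p • β)))) +
           (fun t : ℝ => ((1 - u : ℝ) : EReal) *
             (((1 / t : ℝ) : EReal) * ENNReal.log (f t (θ' • (1 : Fin ℓ → ℝ)))))) t := by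
        filter_upwards [eventually_gt_atTop (0:ℝ)] with t ht
        have hAtop : f t (p • β) ≠ ⊤ := by
          have := (hfin t (p • β) hsum' hnorm' 0).ne; simpa using this
        have hBtop : f t (θ' • (1 : Fin ℓ → ℝ)) ≠ ⊤ := by
          have := (hfin t 0 hsum0 hnorm0 θ').ne; simpa using this
        have hCtop : f t (β + θ • (1 : Fin ℓ → ℝ)) ≠ ⊤ := (hfin t β hs hn θ).ne
        have hA := ENNReal.log_pos_real (hpos t (p • β)) hAtop
        have hB := ENNReal.log_pos_real (hpos t (θ' • (1 : Fin ℓ → ℝ))) hBtop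
        have hC := ENNReal.log_pos_real (hpos t (β + θ • (1 : Fin ℓ → ℝ))) hCtop
        have h0 := hconv t (p • β) (θ' • (1 : Fin ℓ → ℝ)) u hu0.le hu1.le
        rw [← hcomb, hA, hB, hC] at h0
        have h0' : Real.log (f t (β + θ • (1 : Fin ℓ → ℝ))).toReal ≤
            u * Real.log (f t (p • β)).toReal +
            (1 - u) * Real.log (f t (θ' • (1 : Fin ℓ → ℝ))).toReal := by exact_mod_cast h0
        have h1t : (0:ℝ) ≤ 1 / t := by positivity
        simp only [Pi.add_apply]
        rw [hA, hB, hC, ← EReal.coe_mul, ← EReal.coe_mul, ← EReal.coe_mul, ← EReal.coe_mul,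
          ← EReal.coe_mul, ← EReal.coe_add, EReal.coe_le_coe_iff]
        calc 1 / t * Real.log (f t (β + θ • (1 : Fin ℓ → ℝ))).toReal
            ≤ 1 / t * (u * Real.log (f t (p • β)).toReal +
              (1 - u) * Real.log (f t (θ' • (1 : Fin ℓ → ℝ))).toReal) :=
              mul_le_mul_of_nonneg_left h0' h1t
          _ = u * (1 / t * Real.log (f t (p • β)).toReal) +
              (1 - u) * (1 / t * Real.log (f t (θ' • (1 : Fin ℓ → ℝ))).toReal) := by ring
      obtain ⟨r', hr'⟩ := hfinite (p • β) hsum' hnorm'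
      have hL1 : limsup (fun t : ℝ => (u : EReal) *
          (((1 / t : ℝ) : EReal) * ENNReal.log (f t (p • β)))) atTop
          = (u : EReal) * χbar (p • β) := by
        rw [hχbar (p • β)]; exact aux_limsup_coe_mul hu0 _
      have hL2 : limsup (fun t : ℝ => ((1 - u : ℝ) : EReal) *
          (((1 / t : ℝ) : EReal) * ENNReal.log (f t (θ' • (1 : Fin ℓ → ℝ))))) atTop
          = 0 := by
        rw [aux_limsup_coe_mul h1u, hzero θ', mul_zero]
      have hadd := EReal.limsup_add_le
        (u := fun t : ℝ => (u : EReal) * (((1 / t : ℝ) : EReal) * ENNReal.log (f t (p • β))))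
        (v := fun t : ℝ => ((1 - u : ℝ) : EReal) *
          (((1 / t : ℝ) : EReal) * ENNReal.log (f t (θ' • (1 : Fin ℓ → ℝ)))))
        (f := atTop)
        (by rw [hL1, hr', ← EReal.coe_mul]; exact Or.inl (EReal.coe_ne_bot _))
        (by rw [hL1, hr', ← EReal.coe_mul]; exact Or.inl (EReal.coe_ne_top _))
      rw [hL1, hL2, add_zero] at hadd
      calc χbar (β + θ • (1 : Fin ℓ → ℝ))
          = limsup (fun t : ℝ => ((1 / t : ℝ) : EReal) *
            ENNReal.log (f t (β + θ • (1 : Fin ℓ → ℝ)))) atTop := hχbar _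
        _ ≤ _ := (Filter.limsup_le_limsup hptw).trans hadd
    -- Step 2: let p → 1⁺
    set M : ℝ := max ‖β‖ (α₀ / 2) with hM
    have hM0 : 0 < M := lt_of_lt_of_le (by linarith) (le_max_right _ _)
    have hMα : M < α₀ := max_lt hn (by linarith)
    set P : ℝ := α₀ / M with hP
    have hP1 : 1 < P := (one_lt_div hM0).2 hMα
    have hPp : ∀ p ∈ Set.Ioo (1:ℝ) P, p * ‖β‖ < α₀ := by
      intro p hp
      have h1 : p * ‖β‖ ≤ p * M :=
        mul_le_mul_of_nonneg_left (le_max_left _ _) (by linarith [hp.1])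
      have h2 : p * M < P * M := mul_lt_mul_of_pos_right hp.2 hM0
      have h3 : P * M = α₀ := div_mul_cancel₀ _ hM0.ne'
      linarith
    haveI hne : (𝓝[Set.Ioo (1:ℝ) P] (1:ℝ)).NeBot :=
      mem_closure_iff_nhdsWithin_neBot.mp
        (by rw [closure_Ioo hP1.ne]; exact ⟨le_refl 1, hP1.le⟩)
    have hmaps : Set.MapsTo (fun p : ℝ => p • β) (Set.Ioo (1:ℝ) P)
        {α : Fin ℓ → ℝ | (∑ j, α j) = 0 ∧ ‖α‖ < α₀} := by
      intro p hp
      have hp0 : (0:ℝ) < p := by linarith [hp.1]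
      constructor
      · have h : (∑ j, (p • β) j) = p * ∑ j, β j := by
          rw [Finset.mul_sum]; exact Finset.sum_congr rfl (fun j _ => by simp)
        rw [h, hs, mul_zero]
      · rw [norm_smul, Real.norm_eq_abs, abs_of_pos hp0]
        exact hPp p hp
    have hg : ContinuousWithinAt (fun p : ℝ => χbar (p • β)) (Set.Ioo (1:ℝ) P) 1 := by
      have hc2 : ContinuousWithinAt (fun p : ℝ => p • β) (Set.Ioo (1:ℝ) P) 1 :=
        (continuous_id.smul continuous_const).continuousWithinAt
      have hχβ : ContinuousWithinAt χbar {α : Fin ℓ → ℝ | (∑ j, α j) = 0 ∧ ‖α‖ < α₀}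
          ((1:ℝ) • β) := by
        rw [one_smul]; exact hcont β ⟨hs, hn⟩
      exact ContinuousWithinAt.comp (f := fun p : ℝ => p • β) (x := (1:ℝ)) hχβ hc2 hmaps
    have hq : ContinuousWithinAt (fun p : ℝ => ((1 / p : ℝ) : EReal)) (Set.Ioo (1:ℝ) P) 1 := by
      apply ContinuousAt.continuousWithinAt
      have h1 : ContinuousAt (fun p : ℝ => 1 / p) (1:ℝ) :=
        ContinuousAt.div continuousAt_const continuousAt_id one_ne_zero
      exact continuous_coe_real_ereal.continuousAt.comp h1
    obtain ⟨rβ, hrβ⟩ := hfinite β hs hn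
    have hmul : ContinuousAt (fun q : EReal × EReal => q.1 * q.2)
        ((((1:ℝ) / 1 : ℝ) : EReal), χbar ((1:ℝ) • β)) := by
      have h11 : (((1:ℝ) / 1 : ℝ) : EReal) = ((1:ℝ) : EReal) := by norm_num
      apply EReal.continuousAt_mul
      · exact Or.inl (by rw [h11]; simp)
      · exact Or.inl (by rw [h11]; simp)
      · exact Or.inl (by rw [h11]; exact EReal.coe_ne_bot 1)
      · exact Or.inl (by rw [h11]; exact EReal.coe_ne_top 1)
    have htend : Tendsto (fun p : ℝ => ((1 / p : ℝ) : EReal) * χbar (p • β))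
        (𝓝[Set.Ioo (1:ℝ) P] 1) (𝓝 (χbar β)) := by
      have h3 : ContinuousWithinAt (fun p : ℝ => ((1 / p : ℝ) : EReal) * χbar (p • β))
          (Set.Ioo (1:ℝ) P) 1 := ContinuousAt.comp_continuousWithinAt
            (f := fun p : ℝ => (((1 / p : ℝ) : EReal), χbar (p • β))) (x := (1:ℝ))
            hmul (hq.prodMk hg)
      have h4 : Tendsto (fun p : ℝ => ((1 / p : ℝ) : EReal) * χbar (p • β))
          (𝓝[Set.Ioo (1:ℝ) P] 1) (𝓝 ((((1:ℝ) / 1 : ℝ) : EReal) * χbar ((1:ℝ) • β))) := h3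
      have h5 : (((1:ℝ) / 1 : ℝ) : EReal) * χbar ((1:ℝ) • β) = χbar β := by
        rw [one_smul]; norm_num
      rwa [h5] at h4
    exact ge_of_tendsto htend (by
      filter_upwards [self_mem_nhdsWithin] with p hp
      exact hstep p hp.1 (hPp p hp))
  -- Equality via convexity
  intro α hsA hnA θ
  obtain ⟨r, hr⟩ := hfinite α hsA hnA
  have hx : χbar (α + θ • (1 : Fin ℓ → ℝ)) ≤ χbar α := hkey α hsA hnA θ
  have hy : χbar (α + (-θ) • (1 : Fin ℓ → ℝ)) ≤ χbar α := hkey α hsA hnA (-θ)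
  refine le_antisymm hx ?_
  -- convexity: χbar α ≤ ½ χbar(α+θ𝟙) + ½ χbar(α-θ𝟙)
  have hhalf0 : (0:ℝ) ≤ 1/2 := by norm_num
  have hhalf1 : (1/2:ℝ) ≤ 1 := by norm_num
  have hcomb2 : α = (1/2 : ℝ) • (α + θ • (1 : Fin ℓ → ℝ)) +
      (1 - (1/2 : ℝ)) • (α + (-θ) • (1 : Fin ℓ → ℝ)) := by
    funext j
    simp only [Pi.add_apply, Pi.smul_apply, Pi.one_apply, Pi.neg_apply, smul_eq_mul]
    ring
  have hptw2 : ∀ᶠ t in atTop, ((1 / t : ℝ) : EReal) * ENNReal.log (f t α) ≤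
      ((fun t : ℝ => (((1:ℝ)/2 : ℝ) : EReal) *
          (((1 / t : ℝ) : EReal) * ENNReal.log (f t (α + θ • (1 : Fin ℓ → ℝ))))) +
       (fun t : ℝ => (((1:ℝ)/2 : ℝ) : EReal) *
          (((1 / t : ℝ) : EReal) * ENNReal.log (f t (α + (-θ) • (1 : Fin ℓ → ℝ)))))) t := by
    filter_upwards [eventually_gt_atTop (0:ℝ)] with t ht
    have hAtop : f t (α + θ • (1 : Fin ℓ → ℝ)) ≠ ⊤ := (hfin t α hsA hnA θ).ne
    have hBtop : f t (α + (-θ) • (1 : Fin ℓ → ℝ)) ≠ ⊤ := (hfin t α hsA hnA (-θ)).ne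
    have hCtop : f t α ≠ ⊤ := by
      have := (hfin t α hsA hnA 0).ne; simpa using this
    have hA := ENNReal.log_pos_real (hpos t (α + θ • (1 : Fin ℓ → ℝ))) hAtop
    have hB := ENNReal.log_pos_real (hpos t (α + (-θ) • (1 : Fin ℓ → ℝ))) hBtop
    have hC := ENNReal.log_pos_real (hpos t α) hCtop
    have h0 := hconv t (α + θ • (1 : Fin ℓ → ℝ)) (α + (-θ) • (1 : Fin ℓ → ℝ)) (1/2) hhalf0 hhalf1
    rw [← hcomb2, hA, hB, hC] at h0
    have h0' : Real.log (f t α).toReal ≤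
        (1/2) * Real.log (f t (α + θ • (1 : Fin ℓ → ℝ))).toReal +
        (1 - 1/2) * Real.log (f t (α + (-θ) • (1 : Fin ℓ → ℝ))).toReal := by exact_mod_cast h0
    have h1t : (0:ℝ) ≤ 1 / t := by positivity
    simp only [Pi.add_apply]
    rw [hA, hB, hC, ← EReal.coe_mul, ← EReal.coe_mul, ← EReal.coe_mul, ← EReal.coe_mul,
      ← EReal.coe_mul, ← EReal.coe_add, EReal.coe_le_coe_iff]
    calc 1 / t * Real.log (f t α).toReal
        ≤ 1 / t * ((1/2) * Real.log (f t (α + θ • (1 : Fin ℓ → ℝ))).toReal +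
          (1 - 1/2) * Real.log (f t (α + (-θ) • (1 : Fin ℓ → ℝ))).toReal) :=
          mul_le_mul_of_nonneg_left h0' h1t
      _ = (1:ℝ)/2 * (1 / t * Real.log (f t (α + θ • (1 : Fin ℓ → ℝ))).toReal) +
          (1:ℝ)/2 * (1 / t * Real.log (f t (α + (-θ) • (1 : Fin ℓ → ℝ))).toReal) := by ring
  have hhalfpos : (0:ℝ) < 1/2 := by norm_num
  have hL1 : limsup (fun t : ℝ => (((1:ℝ)/2 : ℝ) : EReal) *
      (((1 / t : ℝ) : EReal) * ENNReal.log (f t (α + θ • (1 : Fin ℓ → ℝ))))) atTop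
      = (((1:ℝ)/2 : ℝ) : EReal) * χbar (α + θ • (1 : Fin ℓ → ℝ)) := by
    rw [hχbar (α + θ • (1 : Fin ℓ → ℝ))]; exact aux_limsup_coe_mul hhalfpos _
  have hL2 : limsup (fun t : ℝ => (((1:ℝ)/2 : ℝ) : EReal) *
      (((1 / t : ℝ) : EReal) * ENNReal.log (f t (α + (-θ) • (1 : Fin ℓ → ℝ))))) atTop
      = (((1:ℝ)/2 : ℝ) : EReal) * χbar (α + (-θ) • (1 : Fin ℓ → ℝ)) := by
    rw [hχbar (α + (-θ) • (1 : Fin ℓ → ℝ))]; exact aux_limsup_coe_mul hhalfpos _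
  have hxt : χbar (α + θ • (1 : Fin ℓ → ℝ)) ≠ ⊤ := by
    intro h; rw [h, hr] at hx; exact (EReal.coe_lt_top r).not_ge hx
  have hyt : χbar (α + (-θ) • (1 : Fin ℓ → ℝ)) ≠ ⊤ := by
    intro h; rw [h, hr] at hy; exact (EReal.coe_lt_top r).not_ge hy
  have hadd := EReal.limsup_add_le
    (u := fun t : ℝ => (((1:ℝ)/2 : ℝ) : EReal) *
      (((1 / t : ℝ) : EReal) * ENNReal.log (f t (α + θ • (1 : Fin ℓ → ℝ)))))
    (v := fun t : ℝ => (((1:ℝ)/2 : ℝ) : EReal) *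
      (((1 / t : ℝ) : EReal) * ENNReal.log (f t (α + (-θ) • (1 : Fin ℓ → ℝ)))))
    (f := atTop)
    (by rw [hL2]; exact Or.inr (aux_coe_mul_ne_top hhalfpos hyt))
    (by rw [hL1]; exact Or.inl (aux_coe_mul_ne_top hhalfpos hxt))
  rw [hL1, hL2] at hadd
  have hmain : χbar α ≤ (((1:ℝ)/2 : ℝ) : EReal) * χbar (α + θ • (1 : Fin ℓ → ℝ)) +
      (((1:ℝ)/2 : ℝ) : EReal) * χbar (α + (-θ) • (1 : Fin ℓ → ℝ)) := by
    calc χbar α = limsup (fun t : ℝ => ((1 / t : ℝ) : EReal) * ENNReal.log (f t α)) atTop :=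
          hχbar α
      _ ≤ _ := (Filter.limsup_le_limsup hptw2).trans hadd
  -- Now finish: cases on χbar (α + θ𝟙)
  rcases eq_bot_or_bot_lt (χbar (α + θ • (1 : Fin ℓ → ℝ))) with hxb | hxb
  · exfalso
    rw [hxb, EReal.coe_mul_bot_of_pos hhalfpos, EReal.bot_add, hr] at hmain
    exact (not_le_of_gt (EReal.bot_lt_coe r)) hmain
  · -- χbar (α+θ𝟙) is real
    have hxreal : ∃ s : ℝ, χbar (α + θ • (1 : Fin ℓ → ℝ)) = (s : EReal) :=
      ⟨(χbar (α + θ • (1 : Fin ℓ → ℝ))).toReal,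
        (EReal.coe_toReal hxt hxb.ne').symm⟩
    obtain ⟨s, hsx⟩ := hxreal
    -- bound y ≤ r
    have hy2 : (((1:ℝ)/2 : ℝ) : EReal) * χbar (α + (-θ) • (1 : Fin ℓ → ℝ)) ≤
        (((1:ℝ)/2 : ℝ) : EReal) * (r : EReal) := by
      rw [← hr]
      exact mul_le_mul_of_nonneg_left hy (by exact_mod_cast hhalfpos.le)
    have hmain2 : (r : EReal) ≤ ((1/2 * s + 1/2 * r : ℝ) : EReal) := by
      calc (r : EReal) = χbar α := hr.symm
        _ ≤ _ := hmain
        _ ≤ (((1:ℝ)/2 : ℝ) : EReal) * (s : EReal) + (((1:ℝ)/2 : ℝ) : EReal) * (r : EReal) := by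
            rw [hsx]; exact add_le_add_right hy2 _
        _ = _ := by rw [← EReal.coe_mul, ← EReal.coe_mul, ← EReal.coe_add]
    have hrs : r ≤ s := by
      have := EReal.coe_le_coe_iff.mp hmain2
      linarith
    rw [hsx, hr]
    exact_mod_cast hrs
end

section
/- Let ρ be a density matrix on a finite-dimensional Hilbert space commuting with the commuting self-adjoint family E = (H₁,…,H_ℓ), let H = Σ_j H_j + V with V self-adjoint, and let H_{j,t} = e^{itH} H_j e^{−itH}. Then |Σ_j tr(ρ (H_{j,t} − H_j))| ≤ 2‖V‖ and Σ_{j,k} tr(ρ (H_{j,t}−H_j)(H_{k,t}−H_k)) ≤ 4‖V‖². -/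
open scoped Matrix.Norms.L2Operator ComplexOrder
open scoped MatrixOrder

open Matrix in

lemma trace_mul_abs_le {n : Type*} [Fintype n] [DecidableEq n]
    (ρ A : Matrix n n ℂ) (hρ : ρ.PosSemidef) (hρtr : ρ.trace = 1) :
    ‖(ρ * A).trace‖ ≤ ‖A‖ := by
  classical
  set s := CFC.sqrt ρ with hs_def
  have hss : s * s = ρ := CFC.sqrt_mul_sqrt_self ρ hρ.nonneg
  have hsh : s.IsHermitian := (CFC.sqrt_nonneg ρ).posSemidef.1
  set v : n → EuclideanSpace ℂ n := fun i => WithLp.toLp 2 (fun q => s q i) with hv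
  have hconj : ∀ p i, (starRingEnd ℂ) (s p i) = s i p := by
    intro p i
    have := congrFun (congrFun hsh i) p
    simpa [Matrix.conjTranspose_apply] using this
  have hdiag : ∀ i, (s * A * s) i i
      = inner ℂ (v i) ((EuclideanSpace.equiv n ℂ).symm (A *ᵥ (v i))) := by
    intro i
    simp only [Matrix.mul_apply, PiLp.inner_apply, RCLike.inner_apply, Matrix.mulVec,
      dotProduct, hv, PiLp.continuousLinearEquiv_symm_apply, PiLp.toLp_apply, WithLp.ofLp_toLp]
    simp only [Finset.sum_mul, Finset.mul_sum]
    rw [Finset.sum_comm]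
    refine Finset.sum_congr rfl fun q _ => Finset.sum_congr rfl fun p _ => ?_
    rw [hconj]
    ring
  have hnormv : ∀ i, ‖v i‖ ^ 2 = ∑ q, ‖s q i‖ ^ 2 := by
    intro i
    rw [EuclideanSpace.norm_eq, Real.sq_sqrt (Finset.sum_nonneg fun q _ => sq_nonneg _)]
  have htrace_re : ∑ i, ‖v i‖ ^ 2 = 1 := by
    have h1 : ρ.trace = ∑ i, ∑ q, ((‖s q i‖ ^ 2 : ℝ) : ℂ) := by
      rw [← hss]
      simp only [Matrix.trace, Matrix.diag, Matrix.mul_apply]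
      refine Finset.sum_congr rfl fun i _ => Finset.sum_congr rfl fun q _ => ?_
      rw [← hconj q i, RCLike.conj_mul]
      norm_num
    have h2 := congrArg Complex.re (h1.symm.trans hρtr)
    simp only [Complex.re_sum, Complex.ofReal_re, Complex.one_re] at h2
    simp_rw [hnormv]
    exact h2
  calc ‖(ρ * A).trace‖ = ‖(s * A * s).trace‖ := by
        rw [← hss, Matrix.trace_mul_cycle s A s]
    _ ≤ ∑ i, ‖(s * A * s) i i‖ := by
        simpa [Matrix.trace, Matrix.diag] using
          norm_sum_le Finset.univ (fun i => (s * A * s) i i)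
    _ ≤ ∑ i, ‖A‖ * ‖v i‖ ^ 2 := by
        refine Finset.sum_le_sum fun i _ => ?_
        rw [hdiag i]
        calc ‖(inner ℂ (v i) ((EuclideanSpace.equiv n ℂ).symm (A *ᵥ (v i))) : ℂ)‖
            ≤ ‖v i‖ * ‖((EuclideanSpace.equiv n ℂ).symm (A *ᵥ (v i)))‖ :=
              norm_inner_le_norm _ _
          _ ≤ ‖v i‖ * (‖A‖ * ‖v i‖) :=
              mul_le_mul_of_nonneg_left (Matrix.l2_opNorm_mulVec A (v i)) (norm_nonneg _)
          _ = ‖A‖ * ‖v i‖ ^ 2 := by ring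
    _ = ‖A‖ := by rw [← Finset.mul_sum, htrace_re, mul_one]

/-- for a density matrix ρ commuting with the commuting family
E = (H₁,…,H_ℓ), H = Σ_j H_j + V and H_{j,t} = e^{itH} H_j e^{−itH}, one has
|Σ_j tr(ρ(H_{j,t}−H_j))| ≤ 2‖V‖ and Σ_{j,k} tr(ρ(H_{j,t}−H_j)(H_{k,t}−H_k)) ≤ 4‖V‖². -/
theorem mean_and_covariance_heat_bounds
    {n : Type*} [Fintype n] [DecidableEq n] {ℓ : ℕ}
    (E : Fin ℓ → Matrix n n ℂ) (V ρ : Matrix n n ℂ)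
    (hE : ∀ j, (E j).IsHermitian) (hEcomm : ∀ j k, E j * E k = E k * E j)
    (hV : V.IsHermitian)
    (hρ : ρ.PosSemidef) (hρtr : ρ.trace = 1)
    (hρE : ∀ j, ρ * E j = E j * ρ)
    (H : Matrix n n ℂ) (hH : H = (∑ j, E j) + V)
    (t : ℝ)
    (Et : Fin ℓ → Matrix n n ℂ)
    (hEt : ∀ j, Et j = NormedSpace.exp ((Complex.I * t) • H) * E j *
      NormedSpace.exp ((-(Complex.I * t)) • H)) :
    ‖∑ j, (ρ * (Et j - E j)).trace‖ ≤ 2 * ‖V‖ ∧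
    (∑ j, ∑ k, (ρ * (Et j - E j) * (Et k - E k)).trace).re ≤ 4 * ‖V‖ ^ 2 := by
  classical
  set U : Matrix n n ℂ := NormedSpace.exp ((Complex.I * t) • H) with hU_def
  set U' : Matrix n n ℂ := NormedSpace.exp ((-(Complex.I * t)) • H) with hU'_def
  have hHherm : H.IsHermitian := by
    rw [hH]
    refine Matrix.IsHermitian.add ?_ hV
    unfold Matrix.IsHermitian
    rw [Matrix.conjTranspose_sum]
    exact Finset.sum_congr rfl fun j _ => (hE j).eq
  -- star U = U'
  have hstarU : star U = U' := by
    rw [hU_def, hU'_def, Matrix.star_eq_conjTranspose, ← Matrix.exp_conjTranspose]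
    congr 1
    rw [Matrix.conjTranspose_smul, hHherm.eq]
    congr 1
    simp [Complex.ext_iff]
  -- U * U' = 1 and U' * U = 1
  have hneg : (-(Complex.I * t)) • H = -((Complex.I * t) • H) := by rw [neg_smul]
  have hUU' : U * U' = 1 := by
    rw [hU_def, hU'_def, hneg,
      ← Matrix.exp_add_of_commute ((Complex.I * (t : ℂ)) • H) (-((Complex.I * (t : ℂ)) • H))
        (Commute.neg_right (Commute.refl _)),
      add_neg_cancel, NormedSpace.exp_zero]
  have hU'U : U' * U = 1 := by
    rw [hU_def, hU'_def, hneg,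
      ← Matrix.exp_add_of_commute (-((Complex.I * (t : ℂ)) • H)) ((Complex.I * (t : ℂ)) • H)
        (Commute.neg_left (Commute.refl _)),
      neg_add_cancel, NormedSpace.exp_zero]
  have hUunit : U ∈ unitary (Matrix n n ℂ) := by
    rw [Unitary.mem_iff, hstarU]
    exact ⟨hU'U, hUU'⟩
  have hU'unit : U' ∈ unitary (Matrix n n ℂ) := by
    have : star U' = U := by rw [← hstarU, star_star]
    rw [Unitary.mem_iff, this]
    exact ⟨hUU', hU'U⟩
  -- U commutes with H
  have hUH : U * H = H * U := by
    have : Commute ((Complex.I * t) • H) H := (Commute.refl H).smul_left _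
    exact this.exp_left.eq
  have hUHU' : U * H * U' = H := by
    rw [hUH, mul_assoc, hUU', mul_one]
  set W : Matrix n n ℂ := U * V * U' with hW_def
  -- the key identity
  have hD : ∑ j, (Et j - E j) = V - W := by
    have hsum : ∑ j, Et j = U * (∑ j, E j) * U' := by
      simp_rw [hEt]
      rw [Finset.mul_sum, Finset.sum_mul]
    have hEsum : (∑ j, E j) = H - V := by rw [hH, add_sub_cancel_right]
    rw [Finset.sum_sub_distrib, hsum, hEsum]
    have : U * (H - V) * U' = H - W := by
      rw [mul_sub, sub_mul, hUHU', hW_def]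
    rw [this]
    abel
  -- norm bound on V - W
  have hnormW : ‖W‖ = ‖V‖ := by
    rw [hW_def, mul_assoc, CStarRing.norm_mem_unitary_mul (V * U') hUunit,
      CStarRing.norm_mul_mem_unitary V hU'unit]
  have hnormD : ‖V - W‖ ≤ 2 * ‖V‖ := by
    calc ‖V - W‖ ≤ ‖V‖ + ‖W‖ := norm_sub_le _ _
      _ = 2 * ‖V‖ := by rw [hnormW]; ring
  constructor
  · have h1 : ∑ j, (ρ * (Et j - E j)).trace = (ρ * (V - W)).trace := by
      rw [← hD, Finset.mul_sum, Matrix.trace_sum]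
    rw [h1]
    exact le_trans (trace_mul_abs_le ρ (V - W) hρ hρtr) hnormD
  · have h2 : ∑ j, ∑ k, (ρ * (Et j - E j) * (Et k - E k)).trace
        = (ρ * ((V - W) * (V - W))).trace := by
      calc ∑ j, ∑ k, (ρ * (Et j - E j) * (Et k - E k)).trace
          = ∑ j, (ρ * (Et j - E j) * (∑ k, (Et k - E k))).trace := by
            refine Finset.sum_congr rfl fun j _ => ?_
            rw [Finset.mul_sum, Matrix.trace_sum]
        _ = ((∑ j, ρ * (Et j - E j)) * (∑ k, (Et k - E k))).trace := by
            rw [Finset.sum_mul, Matrix.trace_sum]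
        _ = (ρ * (∑ j, (Et j - E j)) * (∑ k, (Et k - E k))).trace := by
            rw [show ρ * (∑ j, (Et j - E j)) = ∑ j, ρ * (Et j - E j) from Finset.mul_sum _ _ _]
        _ = (ρ * ((V - W) * (V - W))).trace := by rw [hD, mul_assoc]
    rw [h2]
    calc (ρ * ((V - W) * (V - W))).trace.re
        ≤ ‖(ρ * ((V - W) * (V - W))).trace‖ := Complex.re_le_norm _
      _ ≤ ‖(V - W) * (V - W)‖ := trace_mul_abs_le ρ _ hρ hρtr
      _ ≤ ‖V - W‖ * ‖V - W‖ := norm_mul_le _ _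
      _ ≤ (2 * ‖V‖) * (2 * ‖V‖) := by
          exact mul_le_mul hnormD hnormD (norm_nonneg _) (by positivity)
      _ = 4 * ‖V‖ ^ 2 := by ring
end

section
/- Suppose the cumulant generating function (β, α) ↦ χ₊(β_eq + ζ, α), defined and C^{1,2} near (ζ,α) = (0,0), satisfies the symmetry χ₊(β_eq + ζ, α) = χ₊(β_eq + ζ, ζ − α). Then the transport coefficients L_{jk} := −∂²χ₊/∂ζ_j∂α_k |_{ζ=α=0} satisfy 2 L_{jk} = D_{jk}, where D_{jk} := ∂²χ₊/∂α_j∂α_k |_{ζ=α=0}; in particular L_{jk} = L_{kj}. -/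
open ContinuousLinearMap Filter


/-- if χ₊ is C² near the origin (in (ζ,α)) and satisfies the symmetry
χ₊(β_eq+ζ, α) = χ₊(β_eq+ζ, ζ−α) near the origin, then the transport coefficients
L_{jk} = −∂²χ₊/∂ζ_j∂α_k|₀ satisfy 2L_{jk} = D_{jk} where D_{jk} = ∂²χ₊/∂α_j∂α_k|₀;
in particular L_{jk} = L_{kj}. (Here χ(ζ,α) stands for χ₊(β_eq+ζ,α).) -/
theorem onsager_reciprocity
    {ℓ : ℕ}
    (χ : (Fin ℓ → ℝ) × (Fin ℓ → ℝ) → ℝ)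
    (hreg : ContDiffAt ℝ 2 χ (0, 0))
    (hsym : ∀ᶠ p : (Fin ℓ → ℝ) × (Fin ℓ → ℝ) in nhds (0, 0), χ p = χ (p.1, p.1 - p.2))
    (L D : Fin ℓ → Fin ℓ → ℝ)
    (hL : ∀ j k, L j k =
      -(fderiv ℝ (fun ζ => fderiv ℝ (fun a => χ (ζ, a)) 0 (Pi.single k 1)) 0 (Pi.single j 1)))
    (hD : ∀ j k, D j k =
      fderiv ℝ (fun a => fderiv ℝ (fun a' => χ (0, a')) a (Pi.single k 1)) 0 (Pi.single j 1)) :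
    ∀ j k, 2 * L j k = D j k ∧ L j k = L k j := by
  have hF1 : ContDiffAt ℝ 1 (fderiv ℝ χ) (0, 0) := hreg.fderiv_right (m := 1) (by norm_num)
  have hFd : DifferentiableAt ℝ (fderiv ℝ χ) (0, 0) := hF1.differentiableAt (by norm_num)
  set F := fderiv ℝ χ with hFdef
  set f'' := fderiv ℝ F (0, 0) with hf''def
  have hev : ∀ᶠ p : (Fin ℓ → ℝ) × (Fin ℓ → ℝ) in nhds (0, 0), DifferentiableAt ℝ χ p := by
    filter_upwards [hreg.eventually (by norm_num)] with p hp
    exact hp.differentiableAt (by norm_num)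
  -- mixed partial
  have key1 : ∀ j k : Fin ℓ,
      fderiv ℝ (fun ζ => fderiv ℝ (fun a => χ (ζ, a)) 0 (Pi.single k 1)) 0 (Pi.single j 1)
        = f'' (Pi.single j 1, 0) ((0 : Fin ℓ → ℝ), Pi.single k 1) := by
    intro j k
    have hevζ : ∀ᶠ ζ : Fin ℓ → ℝ in nhds 0, DifferentiableAt ℝ χ (ζ, (0 : Fin ℓ → ℝ)) := by
      have hc : ContinuousAt (fun ζ : Fin ℓ → ℝ => (ζ, (0 : Fin ℓ → ℝ))) 0 := by fun_prop
      exact hc.eventually hev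
    have heq : (fun ζ : Fin ℓ → ℝ => fderiv ℝ (fun a => χ (ζ, a)) 0 (Pi.single k 1))
        =ᶠ[nhds 0] fun ζ : Fin ℓ → ℝ => F (ζ, 0) ((0 : Fin ℓ → ℝ), Pi.single k 1) := by
      filter_upwards [hevζ] with ζ hζ
      have h2 : HasFDerivAt (fun a : Fin ℓ → ℝ => χ (ζ, a))
          ((F (ζ, 0)).comp (inr ℝ _ _)) 0 :=
        hζ.hasFDerivAt.comp 0 (hasFDerivAt_prodMk_right ζ 0)
      rw [h2.fderiv]; simp
    rw [heq.fderiv_eq]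
    have hinl : HasFDerivAt (fun ζ : Fin ℓ → ℝ => (ζ, (0 : Fin ℓ → ℝ)))
        (inl ℝ (Fin ℓ → ℝ) (Fin ℓ → ℝ)) 0 := hasFDerivAt_prodMk_left _ _
    have h2 : HasFDerivAt (fun ζ : Fin ℓ → ℝ => F (ζ, 0))
        (f''.comp (inl ℝ (Fin ℓ → ℝ) (Fin ℓ → ℝ))) 0 :=
      HasFDerivAt.comp (f := fun ζ : Fin ℓ → ℝ => (ζ, (0 : Fin ℓ → ℝ))) 0 hFd.hasFDerivAt hinl
    have h3 := h2.clm_apply (hasFDerivAt_const ((0 : Fin ℓ → ℝ), Pi.single k 1) 0)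
    rw [h3.fderiv]; simp
  have key2 : ∀ j k : Fin ℓ,
      fderiv ℝ (fun a => fderiv ℝ (fun a' => χ (0, a')) a (Pi.single k 1)) 0 (Pi.single j 1)
        = f'' ((0 : Fin ℓ → ℝ), Pi.single j 1) ((0 : Fin ℓ → ℝ), Pi.single k 1) := by
    intro j k
    have heva : ∀ᶠ a : Fin ℓ → ℝ in nhds 0, DifferentiableAt ℝ χ ((0 : Fin ℓ → ℝ), a) := by
      have hc : ContinuousAt (fun a : Fin ℓ → ℝ => ((0 : Fin ℓ → ℝ), a)) 0 := by fun_prop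
      exact hc.eventually hev
    have heq : (fun a : Fin ℓ → ℝ => fderiv ℝ (fun a' => χ (0, a')) a (Pi.single k 1))
        =ᶠ[nhds 0] fun a : Fin ℓ → ℝ => F (0, a) ((0 : Fin ℓ → ℝ), Pi.single k 1) := by
      filter_upwards [heva] with a ha
      have h2 : HasFDerivAt (fun a' : Fin ℓ → ℝ => χ (0, a'))
          ((F (0, a)).comp (inr ℝ _ _)) a :=
        ha.hasFDerivAt.comp a (hasFDerivAt_prodMk_right 0 a)
      rw [h2.fderiv]; simp
    rw [heq.fderiv_eq]
    have hinr : HasFDerivAt (fun a : Fin ℓ → ℝ => ((0 : Fin ℓ → ℝ), a))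
        (inr ℝ (Fin ℓ → ℝ) (Fin ℓ → ℝ)) 0 := hasFDerivAt_prodMk_right _ _
    have h2 : HasFDerivAt (fun a : Fin ℓ → ℝ => F (0, a))
        (f''.comp (inr ℝ (Fin ℓ → ℝ) (Fin ℓ → ℝ))) 0 :=
      HasFDerivAt.comp (f := fun a : Fin ℓ → ℝ => ((0 : Fin ℓ → ℝ), a)) 0 hFd.hasFDerivAt hinr
    have h3 := h2.clm_apply (hasFDerivAt_const ((0 : Fin ℓ → ℝ), Pi.single k 1) 0)
    rw [h3.fderiv]; simp
  -- the symmetry map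
  set T : ((Fin ℓ → ℝ) × (Fin ℓ → ℝ)) →L[ℝ] ((Fin ℓ → ℝ) × (Fin ℓ → ℝ)) :=
    (fst ℝ _ _).prod ((fst ℝ _ _) - (snd ℝ _ _)) with hT
  have hTapp : ∀ p : (Fin ℓ → ℝ) × (Fin ℓ → ℝ), T p = (p.1, p.1 - p.2) := fun p => rfl
  have hsym' : χ =ᶠ[nhds ((0, 0) : (Fin ℓ → ℝ) × (Fin ℓ → ℝ))] fun p => χ (T p) := hsym
  have hFsym : F =ᶠ[nhds ((0, 0) : (Fin ℓ → ℝ) × (Fin ℓ → ℝ))]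
      fun p => (F (T p)).comp T := by
    have h1 := hsym'.fderiv (𝕜 := ℝ)
    have h0 : T ((0, 0) : (Fin ℓ → ℝ) × (Fin ℓ → ℝ)) = (0, 0) := by rw [hTapp]; simp
    have hTev : ∀ᶠ p : (Fin ℓ → ℝ) × (Fin ℓ → ℝ) in nhds (0, 0),
        DifferentiableAt ℝ χ (T p) := by
      have hTc : ContinuousAt T ((0, 0) : (Fin ℓ → ℝ) × (Fin ℓ → ℝ)) :=
        T.continuous.continuousAt
      exact hTc.eventually (by rw [h0]; exact hev)
    filter_upwards [h1, hTev] with p hp hdp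
    have hc : HasFDerivAt (fun q => χ (T q)) ((fderiv ℝ χ (T p)).comp T) p :=
      hdp.hasFDerivAt.comp p T.hasFDerivAt
    rw [hFdef, hp, hc.fderiv]
  have hf''sym : f'' = fderiv ℝ (fun p => (F (T p)).comp T)
      ((0, 0) : (Fin ℓ → ℝ) × (Fin ℓ → ℝ)) := hFsym.fderiv_eq
  have h0 : T ((0, 0) : (Fin ℓ → ℝ) × (Fin ℓ → ℝ)) = (0, 0) := by rw [hTapp]; simp
  have h1 : HasFDerivAt (fun p : (Fin ℓ → ℝ) × (Fin ℓ → ℝ) => F (T p)) (f''.comp T)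
      ((0, 0) : (Fin ℓ → ℝ) × (Fin ℓ → ℝ)) := by
    have hFd' : HasFDerivAt F f'' (T ((0, 0) : (Fin ℓ → ℝ) × (Fin ℓ → ℝ))) := by
      rw [h0]; exact hFd.hasFDerivAt
    exact hFd'.comp _ T.hasFDerivAt
  have hcomp := h1.clm_comp
    (hasFDerivAt_const T ((0, 0) : (Fin ℓ → ℝ) × (Fin ℓ → ℝ)))
  have hsymid : ∀ u v : (Fin ℓ → ℝ) × (Fin ℓ → ℝ), f'' u v = f'' (T u) (T v) := by
    intro u v
    have h : f'' u v = (fderiv ℝ (fun p => (F (T p)).comp T)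
        ((0, 0) : (Fin ℓ → ℝ) × (Fin ℓ → ℝ))) u v := by rw [← hf''sym]
    rw [h, hcomp.fderiv]
    simp
  have hswap : IsSymmSndFDerivAt ℝ χ ((0, 0) : (Fin ℓ → ℝ) × (Fin ℓ → ℝ)) :=
    hreg.isSymmSndFDerivAt (by simp)
  -- the key pointwise identity from the symmetry
  have main : ∀ j k : Fin ℓ,
      2 * f'' ((Pi.single j 1 : Fin ℓ → ℝ), (0 : Fin ℓ → ℝ))
        ((0 : Fin ℓ → ℝ), (Pi.single k 1 : Fin ℓ → ℝ))
      = -f'' ((0 : Fin ℓ → ℝ), (Pi.single j 1 : Fin ℓ → ℝ))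
          ((0 : Fin ℓ → ℝ), (Pi.single k 1 : Fin ℓ → ℝ)) := by
    intro j k
    have hid := hsymid ((Pi.single j 1 : Fin ℓ → ℝ), (0 : Fin ℓ → ℝ))
      ((0 : Fin ℓ → ℝ), (Pi.single k 1 : Fin ℓ → ℝ))
    rw [hTapp, hTapp] at hid
    simp only [sub_zero, zero_sub] at hid
    have hsplit : (((Pi.single j 1 : Fin ℓ → ℝ), (Pi.single j 1 : Fin ℓ → ℝ)) :
        (Fin ℓ → ℝ) × (Fin ℓ → ℝ))
        = ((Pi.single j 1 : Fin ℓ → ℝ), (0 : Fin ℓ → ℝ))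
          + ((0 : Fin ℓ → ℝ), (Pi.single j 1 : Fin ℓ → ℝ)) := by simp
    have hneg : (((0 : Fin ℓ → ℝ), -(Pi.single k 1 : Fin ℓ → ℝ)) :
        (Fin ℓ → ℝ) × (Fin ℓ → ℝ)) = -((0 : Fin ℓ → ℝ), (Pi.single k 1 : Fin ℓ → ℝ)) := by
      simp [Prod.neg_mk]
    rw [hsplit, hneg, map_add] at hid
    simp only [ContinuousLinearMap.add_apply, map_neg, ContinuousLinearMap.neg_apply] at hid
    linarith
  intro j k
  have hDsym : D j k = D k j := by
    rw [hD j k, hD k j, key2 j k, key2 k j]; exact hswap _ _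
  have h1 : 2 * L j k = D j k := by
    rw [hL j k, hD j k, key1 j k, key2 j k]
    have := main j k; linarith
  have h2 : 2 * L k j = D k j := by
    rw [hL k j, hD k j, key1 k j, key2 k j]
    have := main k j; linarith
  exact ⟨h1, by linarith [hDsym]⟩
end

section
/- Let e_t(α) = 𝔼[e^{−α ς}] be the moment generating function of a random variable ς (finite for all α ∈ ℝ). The symmetry e_t(α) = e_t(1−α) for all α ∈ ℝ holds if and only if the laws of ς and −ς are mutually absolutely continuous with density dℙ_{−ς}/dℙ_ς(s) = e^{−s} — i.e., for a discrete variable, ℙ(ς = s) = e^{s} ℙ(ς = −s) whenever ℙ(ς = s) ≠ 0. -/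
open Filter Topology

lemma exp_lin_indep (u : Finset ℝ) : ∀ (c : ℝ → ℝ),
    (∀ α : ℝ, ∑ y ∈ u, c y * Real.exp (α * y) = 0) → ∀ y ∈ u, c y = 0 := by
  induction u using Finset.strongInduction with
  | _ u ih =>
    intro c hc y hy
    have hne : u.Nonempty := ⟨y, hy⟩
    set m := u.max' hne with hm
    have hmem : m ∈ u := u.max'_mem hne
    have hcm : c m = 0 := by
      have h0 : ∀ α : ℝ, ∑ z ∈ u, c z * Real.exp (α * (z - m)) = 0 := by
        intro α
        have : ∑ z ∈ u, c z * Real.exp (α * (z - m))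
            = Real.exp (-(α * m)) * ∑ z ∈ u, c z * Real.exp (α * z) := by
          rw [Finset.mul_sum]
          refine Finset.sum_congr rfl fun z _ => ?_
          rw [← mul_assoc, mul_comm (Real.exp (-(α*m))) (c z), mul_assoc,
            ← Real.exp_add]
          ring_nf
        rw [this, hc α, mul_zero]
      have h1 : Tendsto (fun α : ℝ => ∑ z ∈ u, c z * Real.exp (α * (z - m)))
          atTop (𝓝 (c m)) := by
        have : c m = ∑ z ∈ u, (if z = m then c m else 0) := by
          rw [Finset.sum_ite_eq' u m (fun _ => c m), if_pos hmem]
        rw [this]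
        refine tendsto_finset_sum _ fun z hz => ?_
        by_cases hzm : z = m
        · simp only [hzm, if_pos, sub_self, mul_zero, Real.exp_zero, mul_one]
          exact tendsto_const_nhds
        · simp only [hzm, if_neg, if_false]
          have hlt : z - m < 0 := sub_neg.mpr (lt_of_le_of_ne (u.le_max' z hz) hzm)
          have h2 : Tendsto (fun α : ℝ => α * (z - m)) atTop atBot :=
            Tendsto.atTop_mul_const_of_neg hlt tendsto_id
          have h3 : Tendsto (fun α : ℝ => Real.exp (α * (z - m))) atTop (𝓝 0) :=
            Real.tendsto_exp_atBot.comp h2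
          simpa using h3.const_mul (c z)
      have h2 : Tendsto (fun α : ℝ => ∑ z ∈ u, c z * Real.exp (α * (z - m)))
          atTop (𝓝 0) := by
        simp only [h0]; exact tendsto_const_nhds
      exact tendsto_nhds_unique h1 h2
    by_cases hym : y = m
    · rw [hym]; exact hcm
    · refine ih (u.erase m) (Finset.erase_ssubset hmem) c ?_ y (Finset.mem_erase.mpr ⟨hym, hy⟩)
      intro α
      have := hc α
      rw [← Finset.add_sum_erase u _ hmem] at this
      rw [hcm] at this
      simpa using this

/-- for a finitely supported (discrete) real random variable ς with
distribution p and moment generating function e(α) = Σ_s e^{−αs} p(s), the symmetry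
e(α) = e(1−α) for all α holds iff p(s) = e^{s} p(−s) whenever p(s) ≠ 0. -/
theorem mgf_symmetry_iff_fluctuation_relation
    (s : Finset ℝ) (p : ℝ → ℝ)
    (hp0 : ∀ x, 0 ≤ p x) (hsupp : ∀ x, p x ≠ 0 → x ∈ s)
    (hsum : ∑ x ∈ s, p x = 1)
    (e : ℝ → ℝ) (he : ∀ α, e α = ∑ x ∈ s, Real.exp (-(α * x)) * p x) :
    (∀ α : ℝ, e α = e (1 - α)) ↔ (∀ x : ℝ, p x ≠ 0 → p x = Real.exp x * p (-x)) := by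
  constructor
  · intro hsym x hx
    set u : Finset ℝ := s ∪ s.image (fun y => -y) with hu
    have hsu : s ⊆ u := Finset.subset_union_left
    have hneginj : ∀ a ∈ u, ∀ b ∈ u, -a = -b → a = b := by
      intro a _ b _ h; linarith
    have huneg : u.image (fun y => -y) = u := by
      ext z
      simp only [Finset.mem_image, hu, Finset.mem_union]
      constructor
      · rintro ⟨a, ha, rfl⟩
        rcases ha with ha | ⟨b, hb, rfl⟩
        · exact Or.inr ⟨a, ha, rfl⟩
        · simpa using Or.inl hb
      · rintro (hz | ⟨b, hb, rfl⟩)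
        · exact ⟨-z, Or.inr ⟨z, hz, rfl⟩, by simp⟩
        · exact ⟨b, Or.inl hb, by simp⟩
    have key : ∀ y ∈ u, p (-y) - Real.exp (-y) * p y = 0 := by
      refine exp_lin_indep u _ (fun α => ?_)
      have eA : ∑ y ∈ u, p (-y) * Real.exp (α * y) = e α := by
        have himg : ∑ z ∈ u.image (fun y : ℝ => -y), Real.exp (-(α * z)) * p z
            = ∑ y ∈ u, Real.exp (-(α * -y)) * p (-y) :=
          Finset.sum_image hneginj
        rw [huneg] at himg
        rw [he α, Finset.sum_subset hsu (fun z _ hzs => by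
          rw [not_not.mp (mt (hsupp z) hzs), mul_zero]), himg]
        refine Finset.sum_congr rfl fun y _ => ?_
        rw [mul_comm]
        congr 1
        ring_nf
      have eB : ∑ y ∈ u, (Real.exp (-y) * p y) * Real.exp (α * y) = e (1 - α) := by
        rw [he (1 - α), ← Finset.sum_subset hsu (fun z _ hzs => by
          rw [not_not.mp (mt (hsupp z) hzs), mul_zero, zero_mul])]
        refine Finset.sum_congr rfl fun y _ => ?_
        rw [mul_comm (Real.exp (-((1-α)*y))) (p y)]
        rw [mul_comm (Real.exp (-y)) (p y), mul_assoc, ← Real.exp_add]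
        ring_nf
      calc ∑ y ∈ u, (p (-y) - Real.exp (-y) * p y) * Real.exp (α * y)
          = (∑ y ∈ u, p (-y) * Real.exp (α * y))
            - ∑ y ∈ u, (Real.exp (-y) * p y) * Real.exp (α * y) := by
            rw [← Finset.sum_sub_distrib]
            exact Finset.sum_congr rfl fun y _ => by ring
        _ = 0 := by rw [eA, eB, ← hsym α, sub_self]
    have hxu : x ∈ u := hsu (hsupp x hx)
    have := key x hxu
    have hpx : p (-x) = Real.exp (-x) * p x := by linarith
    rw [hpx, ← mul_assoc, ← Real.exp_add]
    simp
  · intro hrel α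
    rw [he α, he (1 - α)]
    set t : Finset ℝ := s.filter (fun x => p x ≠ 0) with ht
    have hmemt : ∀ z, z ∈ t ↔ p z ≠ 0 := by
      intro z
      simp only [ht, Finset.mem_filter]
      exact ⟨fun h => h.2, fun h => ⟨hsupp z h, h⟩⟩
    have hts : t ⊆ s := Finset.filter_subset _ _
    have hredL : ∑ x ∈ s, Real.exp (-(α * x)) * p x
        = ∑ x ∈ t, Real.exp (-(α * x)) * p x :=
      (Finset.sum_subset hts (fun z _ hzt => by
        rw [not_not.mp (fun h => hzt ((hmemt z).mpr h)), mul_zero])).symm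
    have hredR : ∑ x ∈ s, Real.exp (-((1-α) * x)) * p x
        = ∑ x ∈ t, Real.exp (-((1-α) * x)) * p x :=
      (Finset.sum_subset hts (fun z _ hzt => by
        rw [not_not.mp (fun h => hzt ((hmemt z).mpr h)), mul_zero])).symm
    rw [hredL, hredR]
    have htneg : t.image (fun y => -y) = t := by
      ext z
      simp only [Finset.mem_image]
      constructor
      · rintro ⟨a, ha, rfl⟩
        rw [hmemt] at ha ⊢
        intro h0
        exact ha ((hrel a ha).trans (by rw [h0, mul_zero]))
      · intro hz
        refine ⟨-z, ?_, by simp⟩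
        rw [hmemt] at hz ⊢
        intro h0
        exact hz ((hrel z hz).trans (by rw [h0, mul_zero]))
    have himg : ∑ z ∈ t.image (fun y : ℝ => -y), Real.exp (-((1-α) * z)) * p z
        = ∑ y ∈ t, Real.exp (-((1-α) * -y)) * p (-y) :=
      Finset.sum_image (by intro a _ b _ h; linarith)
    rw [htneg] at himg
    rw [himg]
    refine Finset.sum_congr rfl fun y hy => ?_
    have hpy : p y ≠ 0 := (hmemt y).mp hy
    have : p (-y) = Real.exp (-y) * p y := by
      have := hrel y hpy
      rw [this, ← mul_assoc, ← Real.exp_add]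
      simp
    rw [this, ← mul_assoc, ← Real.exp_add]
    ring_nf
end

section
/- Let (H, ρ, E, V) be a finite-dimensional confined multisystem with ρ̃ = Σ_e P_e ρ P_e and χ_t(α) = tr( e^{−itH} ρ̃ e^{α·E} e^{itH} e^{−α·E} ). Then ∂χ_t/∂α_j at α = 0 equals −tr( ρ̃ (H_{j,t} − H_j) ), and ∂²χ_t/∂α_j∂α_k at α = 0 equals tr( ρ̃ (H_{j,t}−H_j)(H_{k,t}−H_k) ), where H_{j,t} = e^{itH} H_j e^{−itH}. -/
open scoped ComplexOrder

section aux
variable {n ι : Type*} [Fintype n] [DecidableEq n] [Fintype ι] [DecidableEq ι] {ℓ : ℕ}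

private lemma aux_pow (P : ι → Matrix n n ℂ)
    (hPmul : ∀ i i', P i * P i' = if i = i' then P i else 0)
    (hPsum : ∑ i, P i = 1) (c : ι → ℂ) (m : ℕ) :
    (∑ i, c i • P i) ^ m = ∑ i, (c i) ^ m • P i := by
  induction m with
  | zero => simpa using hPsum.symm
  | succ m ih =>
      rw [pow_succ, ih, Finset.sum_mul_sum]
      simp only [Matrix.smul_mul, Matrix.mul_smul, hPmul, smul_smul, smul_ite, smul_zero]
      rw [Finset.sum_comm]
      simp [Finset.sum_ite_eq, pow_succ, mul_comm, mul_assoc, mul_left_comm]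

private lemma aux_exp (P : ι → Matrix n n ℂ)
    (hPmul : ∀ i i', P i * P i' = if i = i' then P i else 0)
    (hPsum : ∑ i, P i = 1) (c : ι → ℂ) :
    NormedSpace.exp (∑ i, c i • P i) = ∑ i, Complex.exp (c i) • P i := by
  rw [NormedSpace.exp_eq_tsum (𝕂 := ℂ)]
  beta_reduce
  have h1 : ∀ m : ℕ, ((m.factorial : ℂ))⁻¹ • (∑ i, c i • P i) ^ m
      = ∑ i, (((m.factorial : ℂ))⁻¹ • (c i) ^ m) • P i := by
    intro m
    rw [aux_pow P hPmul hPsum, Finset.smul_sum]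
    simp [smul_smul]
  rw [tsum_congr h1, Summable.tsum_finsetSum (fun i _ => ((NormedSpace.expSeries_summable' (c i)).smul_const (P i)))]
  refine Finset.sum_congr rfl fun i _ => ?_
  rw [Summable.tsum_smul_const (NormedSpace.expSeries_summable' (c i)), Complex.exp_eq_exp_ℂ,
    NormedSpace.exp_eq_tsum (𝕂 := ℂ)]

private lemma trace_sum_prod (M U : Matrix n n ℂ) (P : ι → Matrix n n ℂ) (f g : ι → ℂ) :
    ∑ p : ι × ι, f p.1 * g p.2 * (M * P p.1 * U * P p.2).trace
      = (M * (∑ i, f i • P i) * U * (∑ i, g i • P i)).trace := by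
  rw [Fintype.sum_prod_type]
  simp only [Finset.mul_sum, Finset.sum_mul, Matrix.smul_mul, Matrix.mul_smul,
    Matrix.trace_sum, Matrix.trace_smul, smul_eq_mul]
  rw [Finset.sum_comm]
  exact Finset.sum_congr rfl fun i _ => Finset.sum_congr rfl fun i' _ => by ring

noncomputable def Lmap (ℓ : ℕ) (v : Fin ℓ → ℂ) : (Fin ℓ → ℝ) →L[ℝ] ℂ :=
  ∑ j, (ContinuousLinearMap.proj j).smulRight (v j)

lemma Lmap_apply (v : Fin ℓ → ℂ) (β : Fin ℓ → ℝ) :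
    Lmap ℓ v β = ∑ j, (β j : ℂ) * v j := by
  simp [Lmap, ContinuousLinearMap.sum_apply, Complex.real_smul]

lemma Lmap_single (v : Fin ℓ → ℂ) (k : Fin ℓ) :
    Lmap ℓ v (Pi.single k 1) = v k := by
  rw [Lmap_apply]
  rw [Finset.sum_eq_single k] <;> simp (config := { contextual := true }) [Pi.single_apply]

lemma hasFDeriv_key (v : Fin ℓ → ℂ) (c : ℂ) (α : Fin ℓ → ℝ) :
    HasFDerivAt (fun β : Fin ℓ → ℝ => Complex.exp (∑ j, (β j : ℂ) * v j) * c)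
      ((Complex.exp (∑ j, (α j : ℂ) * v j) * c) • Lmap ℓ v) α := by
  have h1 : HasFDerivAt (fun β : Fin ℓ → ℝ => Complex.exp (Lmap ℓ v β))
      (Complex.exp (Lmap ℓ v α) • Lmap ℓ v) α :=
    (Complex.hasDerivAt_exp (Lmap ℓ v α)).comp_hasFDerivAt α (Lmap ℓ v).hasFDerivAt
  have h2 := h1.mul_const c
  have h3 : (fun β : Fin ℓ → ℝ => Complex.exp (Lmap ℓ v β) * c)
      = fun β : Fin ℓ → ℝ => Complex.exp (∑ j, (β j : ℂ) * v j) * c := by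
    funext β; rw [Lmap_apply]
  rw [h3] at h2
  refine h2.congr_fderiv ?_
  rw [Lmap_apply, smul_smul, mul_comm c]

lemma fderiv_sum_exp {κ : Type*} [Fintype κ] (w : κ → Fin ℓ → ℂ) (c : κ → ℂ)
    (α : Fin ℓ → ℝ) (k : Fin ℓ) :
    fderiv ℝ (fun β : Fin ℓ → ℝ => ∑ p, Complex.exp (∑ j, (β j : ℂ) * w p j) * c p)
      α (Pi.single k 1)
    = ∑ p, Complex.exp (∑ j, (α j : ℂ) * w p j) * (c p * w p k) := by
  have h := HasFDerivAt.fun_sum (u := Finset.univ)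
    (fun p _ => hasFDeriv_key (w p) (c p) α)
  rw [h.fderiv, ContinuousLinearMap.sum_apply]
  refine Finset.sum_congr rfl fun p _ => ?_
  rw [ContinuousLinearMap.smul_apply, Lmap_single, smul_eq_mul]
  ring

end aux

/-- derivatives of the TTM generating function at α = 0:
∂χ_t/∂α_j|₀ = −tr(ρ̃(H_{j,t}−H_j)) and ∂²χ_t/∂α_j∂α_k|₀ = tr(ρ̃(H_{j,t}−H_j)(H_{k,t}−H_k)). -/
theorem ttm_mgf_derivatives_at_zero
    {n ι : Type*} [Fintype n] [DecidableEq n] [Fintype ι] {ℓ : ℕ}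
    (P : ι → Matrix n n ℂ)
    (hPherm : ∀ i, (P i).IsHermitian) (hPidem : ∀ i, P i * P i = P i)
    (hPorth : ∀ i i', i ≠ i' → P i * P i' = 0) (hPsum : ∑ i, P i = 1)
    (e : ι → Fin ℓ → ℝ)
    (E : Fin ℓ → Matrix n n ℂ)
    (hE : ∀ j, E j = ∑ i, ((e i j : ℝ) : ℂ) • P i)
    (V : Matrix n n ℂ) (hV : V.IsHermitian)
    (H : Matrix n n ℂ) (hH : H = (∑ j, E j) + V)
    (ρ : Matrix n n ℂ) (hρ : ρ.PosSemidef) (hρtr : ρ.trace = 1)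
    (ρt : Matrix n n ℂ) (hρt : ρt = ∑ i, P i * ρ * P i)
    (t : ℝ)
    (χ : (Fin ℓ → ℝ) → ℂ)
    (hχ : ∀ α : Fin ℓ → ℝ, χ α =
      (NormedSpace.exp ((-(Complex.I * t)) • H) * ρt *
        NormedSpace.exp (∑ j, ((α j : ℝ) : ℂ) • E j) *
        NormedSpace.exp ((Complex.I * t) • H) *
        NormedSpace.exp (-(∑ j, ((α j : ℝ) : ℂ) • E j))).trace)
    (Et : Fin ℓ → Matrix n n ℂ)
    (hEt : ∀ j, Et j = NormedSpace.exp ((Complex.I * t) • H) * E j *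
      NormedSpace.exp ((-(Complex.I * t)) • H)) :
    (∀ j, fderiv ℝ χ 0 (Pi.single j 1) = -((ρt * (Et j - E j)).trace)) ∧
    (∀ j k, fderiv ℝ (fun α => fderiv ℝ χ α (Pi.single k 1)) 0 (Pi.single j 1) =
      (ρt * (Et j - E j) * (Et k - E k)).trace) := by
  classical
  have hPmul : ∀ i i', P i * P i' = if i = i' then P i else 0 := by
    intro i i'
    by_cases h : i = i'
    · subst h; simp [hPidem]
    · simp [h, hPorth i i' h]
  set U := NormedSpace.exp ((Complex.I * t) • H) with hU
  set U' := NormedSpace.exp ((-(Complex.I * t)) • H) with hU'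
  have hUU' : U * U' = 1 := by
    rw [hU, hU', show (-(Complex.I * t)) • H = -((Complex.I * t) • H) from (neg_smul _ _),
      ← Matrix.exp_add_of_commute _ _ (Commute.refl ((Complex.I * t) • H)).neg_right, add_neg_cancel,
      NormedSpace.exp_zero]
  have hU'U : U' * U = 1 := by
    rw [hU, hU', show (-(Complex.I * t)) • H = -((Complex.I * t) • H) from (neg_smul _ _),
      ← Matrix.exp_add_of_commute _ _ (Commute.refl ((Complex.I * t) • H)).neg_left, neg_add_cancel,
      NormedSpace.exp_zero]
  have hPρt : ∀ i, P i * ρt = ρt * P i := by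
    intro i
    rw [hρt, Finset.mul_sum, Finset.sum_mul]
    refine Finset.sum_congr rfl fun i' _ => ?_
    by_cases h : i = i'
    · subst h
      have l : P i * (P i * ρ * P i) = P i * ρ * P i := by
        rw [← mul_assoc, ← mul_assoc, hPidem]
      have r : P i * ρ * P i * P i = P i * ρ * P i := by
        rw [mul_assoc, hPidem]
      rw [l, r]
    · have h1 : P i * (P i' * ρ * P i') = 0 := by
        rw [show P i' * ρ * P i' = P i' * (ρ * P i') from by rw [mul_assoc], ← mul_assoc,
          hPorth i i' h, zero_mul]
      have h2 : P i' * ρ * P i' * P i = 0 := by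
        rw [mul_assoc, hPorth i' i (fun hc => h hc.symm), mul_zero]
      rw [h1, h2]
  have hρtE : ∀ k, ρt * E k = E k * ρt := by
    intro k
    rw [hE, Finset.mul_sum, Finset.sum_mul]
    refine Finset.sum_congr rfl fun i _ => ?_
    rw [Matrix.mul_smul, Matrix.smul_mul, hPρt]
  have hEprod : ∀ j k, E j * E k = ∑ i, ((e i j : ℂ) * (e i k : ℂ)) • P i := by
    intro j k
    rw [hE j, hE k, Finset.sum_mul_sum]
    simp only [Matrix.smul_mul, Matrix.mul_smul, hPmul, smul_smul, smul_ite, smul_zero]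
    simp only [Finset.sum_ite_eq, Finset.mem_univ, if_true]
    exact Finset.sum_congr rfl fun i _ => by rw [mul_comm]
  -- generic trace identity
  have keyT : ∀ (f g : ι → ℂ) (a b : Matrix n n ℂ),
      (∑ i, f i • P i) = a → (∑ i, g i • P i) = b →
      ∑ p : ι × ι, f p.1 * g p.2 * (U' * ρt * P p.1 * U * P p.2).trace
        = (ρt * a * (U * b * U')).trace := by
    intro f g a b ha hb
    rw [trace_sum_prod, ha, hb,
      show U' * ρt * a * U * b = U' * (ρt * a * (U * b)) from by simp [mul_assoc],
      Matrix.trace_mul_comm,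
      show ρt * a * (U * b) * U' = ρt * a * (U * b * U') from by simp [mul_assoc]]
  have hone : (∑ i, (fun _ : ι => (1 : ℂ)) i • P i) = 1 := by simpa using hPsum
  have k1 : ∀ jj, ∑ p : ι × ι,
      (e p.1 jj : ℂ) * 1 * (U' * ρt * P p.1 * U * P p.2).trace = (ρt * E jj).trace := by
    intro jj
    rw [keyT _ _ _ _ (hE jj).symm hone, mul_one, hUU', mul_one]
  have k2 : ∀ jj, ∑ p : ι × ι,
      1 * (e p.2 jj : ℂ) * (U' * ρt * P p.1 * U * P p.2).trace = (ρt * Et jj).trace := by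
    intro jj
    rw [keyT _ _ _ _ hone (hE jj).symm, mul_one, ← hEt jj]
  have k3 : ∀ jj kk, ∑ p : ι × ι,
      (e p.1 jj : ℂ) * (e p.2 kk : ℂ) * (U' * ρt * P p.1 * U * P p.2).trace
        = (ρt * E jj * Et kk).trace := by
    intro jj kk
    rw [keyT _ _ _ _ (hE jj).symm (hE kk).symm, ← hEt kk]
  have k4 : ∀ jj kk, ∑ p : ι × ι,
      (e p.1 kk : ℂ) * (e p.2 jj : ℂ) * (U' * ρt * P p.1 * U * P p.2).trace
        = (ρt * Et jj * E kk).trace := by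
    intro jj kk
    rw [keyT _ _ _ _ (hE kk).symm (hE jj).symm, ← hEt jj,
      show ρt * E kk * Et jj = E kk * (ρt * Et jj) from by rw [hρtE, mul_assoc],
      Matrix.trace_mul_comm]
  have k5 : ∀ jj kk, ∑ p : ι × ι,
      (e p.1 jj : ℂ) * (e p.1 kk : ℂ) * (U' * ρt * P p.1 * U * P p.2).trace
        = (ρt * (E jj * E kk)).trace := by
    intro jj kk
    have h := keyT (fun i => (e i jj : ℂ) * (e i kk : ℂ)) (fun _ => 1) (E jj * E kk) 1
      (hEprod jj kk).symm hone
    simp only [mul_one, hUU'] at h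
    exact h
  have k6 : ∀ jj kk, ∑ p : ι × ι,
      (e p.2 jj : ℂ) * (e p.2 kk : ℂ) * (U' * ρt * P p.1 * U * P p.2).trace
        = (ρt * (Et jj * Et kk)).trace := by
    intro jj kk
    have hb : U * (E jj * E kk) * U' = Et jj * Et kk := by
      have hx : ∀ X : Matrix n n ℂ, U' * (U * X) = X := by
        intro X; rw [← mul_assoc, hU'U, one_mul]
      rw [hEt jj, hEt kk]
      simp only [mul_assoc, hx]
    have h := keyT (fun _ => (1 : ℂ)) (fun i => (e i jj : ℂ) * (e i kk : ℂ)) 1 (E jj * E kk)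
      hone (hEprod jj kk).symm
    simp only [one_mul, mul_one] at h
    rw [hb] at h
    exact h
  -- rewrite χ as a finite sum of exponentials
  have hA : ∀ α : Fin ℓ → ℝ, ∑ j, ((α j : ℝ) : ℂ) • E j
      = ∑ i, (∑ j, (α j : ℂ) * (e i j : ℂ)) • P i := by
    intro α
    simp only [hE, Finset.smul_sum, smul_smul]
    rw [Finset.sum_comm]
    simp [Finset.sum_smul]
  have hχfun : χ = fun α : Fin ℓ → ℝ => ∑ p : ι × ι,
      Complex.exp (∑ j, (α j : ℂ) * ((e p.1 j : ℂ) - (e p.2 j : ℂ))) *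
        (U' * ρt * P p.1 * U * P p.2).trace := by
    funext α
    rw [hχ α, hA α]
    have hneg : -(∑ i, (∑ j, (α j : ℂ) * (e i j : ℂ)) • P i)
        = ∑ i, (-(∑ j, (α j : ℂ) * (e i j : ℂ))) • P i := by
      rw [← Finset.sum_neg_distrib]
      simp [neg_smul]
    rw [hneg, aux_exp P hPmul hPsum, aux_exp P hPmul hPsum, ← trace_sum_prod]
    refine Finset.sum_congr rfl fun p _ => ?_
    rw [← Complex.exp_add]
    congr 1
    rw [← sub_eq_add_neg, ← Finset.sum_sub_distrib]
    congr 1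
    exact Finset.sum_congr rfl fun j _ => by ring
  rw [hχfun]
  constructor
  · intro j
    rw [fderiv_sum_exp (fun p : ι × ι => fun j' => ((e p.1 j' : ℂ) - (e p.2 j' : ℂ)))
      (fun p : ι × ι => (U' * ρt * P p.1 * U * P p.2).trace) 0 j]
    simp only [Pi.zero_apply, Complex.ofReal_zero, zero_mul, Finset.sum_const_zero,
      Complex.exp_zero, one_mul]
    have hsplit : ∑ p : ι × ι,
        (U' * ρt * P p.1 * U * P p.2).trace * ((e p.1 j : ℂ) - (e p.2 j : ℂ))
        = (∑ p : ι × ι, (e p.1 j : ℂ) * 1 * (U' * ρt * P p.1 * U * P p.2).trace)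
          - ∑ p : ι × ι, 1 * (e p.2 j : ℂ) * (U' * ρt * P p.1 * U * P p.2).trace := by
      rw [← Finset.sum_sub_distrib]
      exact Finset.sum_congr rfl fun p _ => by ring
    rw [hsplit, k1, k2, mul_sub, Matrix.trace_sub, neg_sub]
  · intro j k
    have hin : (fun α : Fin ℓ → ℝ => fderiv ℝ (fun α : Fin ℓ → ℝ => ∑ p : ι × ι,
        Complex.exp (∑ j, (α j : ℂ) * ((e p.1 j : ℂ) - (e p.2 j : ℂ))) *
          (U' * ρt * P p.1 * U * P p.2).trace) α (Pi.single k 1))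
        = fun α : Fin ℓ → ℝ => ∑ p : ι × ι,
        Complex.exp (∑ j, (α j : ℂ) * ((e p.1 j : ℂ) - (e p.2 j : ℂ))) *
          ((U' * ρt * P p.1 * U * P p.2).trace * ((e p.1 k : ℂ) - (e p.2 k : ℂ))) := by
      funext α
      exact fderiv_sum_exp (fun p : ι × ι => fun j' => ((e p.1 j' : ℂ) - (e p.2 j' : ℂ)))
        (fun p : ι × ι => (U' * ρt * P p.1 * U * P p.2).trace) α k
    rw [hin, fderiv_sum_exp (fun p : ι × ι => fun j' => ((e p.1 j' : ℂ) - (e p.2 j' : ℂ)))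
      (fun p : ι × ι => (U' * ρt * P p.1 * U * P p.2).trace *
        ((e p.1 k : ℂ) - (e p.2 k : ℂ))) 0 j]
    simp only [Pi.zero_apply, Complex.ofReal_zero, zero_mul, Finset.sum_const_zero,
      Complex.exp_zero, one_mul]
    have hsplit : ∑ p : ι × ι,
        (U' * ρt * P p.1 * U * P p.2).trace * ((e p.1 k : ℂ) - (e p.2 k : ℂ)) *
          ((e p.1 j : ℂ) - (e p.2 j : ℂ))
        = ((∑ p : ι × ι, (e p.1 j : ℂ) * (e p.1 k : ℂ) *
              (U' * ρt * P p.1 * U * P p.2).trace)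
          - ∑ p : ι × ι, (e p.1 j : ℂ) * (e p.2 k : ℂ) *
              (U' * ρt * P p.1 * U * P p.2).trace)
          - ((∑ p : ι × ι, (e p.1 k : ℂ) * (e p.2 j : ℂ) *
              (U' * ρt * P p.1 * U * P p.2).trace)
            - ∑ p : ι × ι, (e p.2 j : ℂ) * (e p.2 k : ℂ) *
              (U' * ρt * P p.1 * U * P p.2).trace) := by
      simp only [← Finset.sum_sub_distrib]
      exact Finset.sum_congr rfl fun p _ => by ring
    rw [hsplit, k5 j k, k3 j k, k4 j k, k6 j k]
    simp only [sub_mul, mul_sub, Matrix.trace_sub, mul_assoc]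
    ring
end
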